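/- arXiv:1206.0327 — 2 statements merged into one kernel-verified Lean document; each statement's English description precedes it below -/
import Mathlib

section
/- ι(kQ) ⊆ kℒ^+: every labeled forest occurring in the image under ι of any element of kQ is aligned. -/
set_option maxHeartbeats 1000000

/-! # Common definitions: trees, forests, descent algebras -/

/-- Labeled binary trees: leaves carry a natural number (positive in valid forests),
internal nodes carry a label. -/
inductive LTree : Type
  | leaf : ℕ → LTree
  | node : ℕ → LTree → LTree → LTree
  deriving DecidableEq

instance : Inhabited LTree := ⟨LTree.leaf 1⟩

/-- Unlabeled binary trees with natural number leaves. -/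
inductive UTree : Type
  | leaf : ℕ → UTree
  | node : UTree → UTree → UTree
  deriving DecidableEq

instance : Inhabited UTree := ⟨UTree.leaf 1⟩

namespace LTree

/-- The value of a tree: the sum of its leaf entries. -/
def value : LTree → ℕ
  | leaf x => x
  | node _ t1 t2 => t1.value + t2.value

/-- The foliage of a tree: the list of its leaf entries, left to right. -/
def foliage : LTree → List ℕ
  | leaf x => [x]
  | node _ t1 t2 => t1.foliage ++ t2.foliage

/-- The number of internal nodes. -/
def numNodes : LTree → ℕ
  | leaf _ => 0
  | node _ t1 t2 => t1.numNodes + t2.numNodes + 1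

/-- The list of node labels (in preorder). -/
def labels : LTree → List ℕ
  | leaf _ => []
  | node i t1 t2 => i :: (t1.labels ++ t2.labels)

/-- Labels strictly increase downwards, starting above `p`. -/
def incrFrom : ℕ → LTree → Prop
  | _, leaf _ => True
  | p, node i t1 t2 => p < i ∧ incrFrom i t1 ∧ incrFrom i t2

/-- Shift all node labels up by `m`. -/
def shift (m : ℕ) : LTree → LTree
  | leaf x => leaf x
  | node i t1 t2 => node (i + m) (t1.shift m) (t2.shift m)

/-- Decrease all node labels by one. -/
def dec : LTree → LTree
  | leaf x => leaf x
  | node i t1 t2 => node (i - 1) t1.dec t2.dec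

/-- A tree is aligned if at every node the value of the left subtree is
strictly smaller than the value of the right subtree. -/
def Aligned : LTree → Prop
  | leaf _ => True
  | node _ t1 t2 => t1.value < t2.value ∧ t1.Aligned ∧ t2.Aligned

/-- Replace the leaves of a tree (left to right) by the trees from the supplied list;
returns the new tree together with the unused trees. -/
def graft : LTree → List LTree → LTree × List LTree
  | leaf x, [] => (leaf x, [])
  | leaf _, t :: ts => (t, ts)
  | node i t1 t2, ts =>
    let p1 := t1.graft ts
    let p2 := t2.graft p1.2
    (node i p1.1 p2.1, p2.2)

/-- Find the node with label `i` and return the values of its two subtrees. -/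
def findLab (i : ℕ) : LTree → Option (ℕ × ℕ)
  | leaf _ => none
  | node j t1 t2 =>
    if j = i then some (t1.value, t2.value)
    else (t1.findLab i).orElse (fun _ => t2.findLab i)

/-- The label at the root, if the tree is a node. -/
def rootLabel? : LTree → Option ℕ
  | leaf _ => none
  | node i _ _ => some i

/-- The subtree at a position (list of booleans; `false` = left, `true` = right). -/
def subtreeAt : LTree → List Bool → Option LTree
  | t, [] => some t
  | leaf _, _ :: _ => none
  | node _ t1 t2, b :: p => (if b then t2 else t1).subtreeAt p

/-- Replace the subtree at a position. -/
def replaceAt : LTree → List Bool → LTree → LTree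
  | _, [], u => u
  | leaf x, _ :: _, _ => leaf x
  | node i t1 t2, b :: p, u =>
    if b then node i t1 (t2.replaceAt p u) else node i (t1.replaceAt p u) t2

end LTree

namespace UTree

/-- The value of an unlabeled tree. -/
def value : UTree → ℕ
  | leaf x => x
  | node t1 t2 => t1.value + t2.value

/-- The foliage of an unlabeled tree. -/
def foliage : UTree → List ℕ
  | leaf x => [x]
  | node t1 t2 => t1.foliage ++ t2.foliage

/-- The number of internal nodes. -/
def numNodes : UTree → ℕ
  | leaf _ => 0
  | node t1 t2 => t1.numNodes + t2.numNodes + 1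

/-- All leaf entries are positive. -/
def leavesPos : UTree → Prop
  | leaf x => 0 < x
  | node t1 t2 => t1.leavesPos ∧ t2.leavesPos

/-- An unlabeled tree is aligned if at every node the left value is smaller
than the right value. -/
def Aligned : UTree → Prop
  | leaf _ => True
  | node t1 t2 => t1.value < t2.value ∧ t1.Aligned ∧ t2.Aligned

/-- No node has two leaf children bearing the same value. -/
def NoTwin : UTree → Prop
  | leaf _ => True
  | node t1 t2 => t1.NoTwin ∧ t2.NoTwin ∧ ¬ ∃ a, t1 = leaf a ∧ t2 = leaf a

/-- Graft: replace leaves (left to right) by trees from the supplied list. -/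
def graft : UTree → List UTree → UTree × List UTree
  | leaf x, [] => (leaf x, [])
  | leaf _, t :: ts => (t, ts)
  | node t1 t2, ts =>
    let p1 := t1.graft ts
    let p2 := t2.graft p1.2
    (node p1.1 p2.1, p2.2)

/-- The total order on unlabeled trees: compare values, then (reversed) number of
nodes, then recursively the left and right subtrees. -/
def ltt : UTree → UTree → Prop
  | leaf a, leaf b => a < b
  | leaf a, node y1 y2 => a < (node y1 y2).value
  | node x1 x2, leaf b => (node x1 x2).value ≤ b
  | node x1 x2, node y1 y2 =>
      (node x1 x2).value < (node y1 y2).value ∨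
      ((node x1 x2).value = (node y1 y2).value ∧
        ((node y1 y2).numNodes < (node x1 x2).numNodes ∨
          ((node x1 x2).numNodes = (node y1 y2).numNodes ∧
            (ltt x1 y1 ∨ (x1 = y1 ∧ ltt x2 y2)))))

end UTree

/-- Erase the node labels of a labeled tree. -/
def eraseT : LTree → UTree
  | .leaf x => .leaf x
  | .node _ t1 t2 => .node (eraseT t1) (eraseT t2)

/-! ## Labeled forests -/

/-- The squash of a forest: the list of values of its trees. -/
def squash (X : List LTree) : List ℕ := X.map LTree.value

/-- The foliage of a forest. -/
def forestFoliage (X : List LTree) : List ℕ := X.flatMap LTree.foliage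

/-- The length of a forest: its total number of nodes. -/
def forestLen (X : List LTree) : ℕ := (X.map LTree.numNodes).sum

/-- The value of a forest: the sum of the values of its trees. -/
def forestValue (X : List LTree) : ℕ := (X.map LTree.value).sum

/-- All node labels of a forest. -/
def forestLabels (X : List LTree) : List ℕ := X.flatMap LTree.labels

/-- A list of labeled trees is a labeled forest if every node's label exceeds that
of its parent, the labels used are exactly `1, 2, …, l` where `l` is the number
of nodes, and all leaves are positive. -/
def IsLForest (X : List LTree) : Prop :=
  (∀ t ∈ X, t.incrFrom 0) ∧
  (forestLabels X).Perm (List.range' 1 (forestLen X)) ∧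
  ∀ x ∈ forestFoliage X, 0 < x

/-- A forest is aligned if all its trees are. -/
def ForestAligned (X : List LTree) : Prop := ∀ t ∈ X, t.Aligned

/-- Replace the leaves of the forest `X` (left to right) by the trees of `ys`. -/
def graftForest : List LTree → List LTree → List LTree
  | [], _ => []
  | t :: ts, ys =>
    let p := t.graft ys
    p.1 :: graftForest ts p.2

/-- The product `X • Y` of labeled forests: replace the `i`-th leaf of `X` by the
`i`-th tree of `Y`, after shifting all node labels of `Y` up by `ℓ(X)`.
(Meaningful when the foliage of `X` equals the squash of `Y`.) -/
def bullet (X Y : List LTree) : List LTree :=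
  graftForest X (Y.map (LTree.shift (forestLen X)))

/-- The forest of leaves determined by a composition. -/
def leavesOf (c : List ℕ) : List LTree := c.map LTree.leaf

/-- Iterated product `X₁ • (X₂ • (⋯ • Xₗ))` of a list of forests. -/
def chainProd : List (List LTree) → List LTree
  | [] => []
  | [A] => A
  | A :: F => bullet A (chainProd F)

/-- Find the node with label `i` in a forest; return the values of its subtrees. -/
def forestFindLab (i : ℕ) : List LTree → Option (ℕ × ℕ)
  | [] => none
  | t :: r => (t.findLab i).orElse (fun _ => forestFindLab i r)

/-! ## Unlabeled forests -/

def squashU (X : List UTree) : List ℕ := X.map UTree.value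
def foliageU (X : List UTree) : List ℕ := X.flatMap UTree.foliage
def forestLenU (X : List UTree) : ℕ := (X.map UTree.numNodes).sum
def forestValueU (X : List UTree) : ℕ := (X.map UTree.value).sum

/-- An unlabeled forest is valid when all its leaves are positive. -/
def IsUForest (X : List UTree) : Prop := ∀ x ∈ foliageU X, 0 < x

def ForestAlignedU (X : List UTree) : Prop := ∀ t ∈ X, t.Aligned

def graftForestU : List UTree → List UTree → List UTree
  | [], _ => []
  | t :: ts, ys =>
    let p := t.graft ys
    p.1 :: graftForestU ts p.2

/-- The product of unlabeled forests (no label adjustment needed). -/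
def bulletU (X Y : List UTree) : List UTree := graftForestU X Y

/-- Erase all node labels of a labeled forest. -/
def eraseF (X : List LTree) : List UTree := X.map eraseT
/-! ## The difference operator δ and the map Δ -/

/-- Locate the part of the forest whose root is the node labeled `1`; return its
(0-based) index together with the forest obtained by splitting that part into its
two subtrees. -/
def splitAt1 : List LTree → Option (ℕ × List LTree)
  | [] => none
  | LTree.node i t1 t2 :: rest =>
      if i = 1 then some (0, t1 :: t2 :: rest)
      else (splitAt1 rest).map (fun p => (p.1 + 1, LTree.node i t1 t2 :: p.2))
  | LTree.leaf x :: rest => (splitAt1 rest).map (fun p => (p.1 + 1, LTree.leaf x :: p.2))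

/-- Swap the entries in positions `i` and `i+1` (0-based) of a list. -/
def swapAdj {α : Type} : ℕ → List α → List α
  | 0, a :: b :: r => b :: a :: r
  | n + 1, a :: r => a :: swapAdj n r
  | _, l => l

/-- The difference operator `δ` on the span of labeled forests: if `ℓ(X) = 0` then
`δ(X) = X`; otherwise, if the node labeled 1 is the root of the `i`-th part with
subtrees `X₁, X₂`, then `δ(X) = Y − Y.(i,i+1)` where `Y` is obtained by replacing
the `i`-th part by the parts `X₁ X₂` and decreasing all labels by one. -/
noncomputable def deltaF (k : Type) [Ring k] (X : List LTree) : (List LTree) →₀ k :=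
  match splitAt1 X with
  | none => Finsupp.single X 1
  | some (i, Y) =>
      Finsupp.single (Y.map LTree.dec) 1 - Finsupp.single (swapAdj i (Y.map LTree.dec)) 1

/-- The linear extension of `δ`. -/
noncomputable def deltaLin (k : Type) [Ring k] :
    ((List LTree) →₀ k) →ₗ[k] ((List LTree) →₀ k) :=
  (Finsupp.lift ((List LTree) →₀ k) k (List LTree)) (deltaF k)

/-- `Δ(X) = δ^{ℓ(X)}(X)`, recorded as an element of the free associative algebra
with basis the compositions (identifying a forest of length 0 with its foliage). -/
noncomputable def DeltaComp (k : Type) [Ring k] (X : List LTree) : (List ℕ) →₀ k :=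
  Finsupp.mapDomain forestFoliage
    ((fun v => deltaLin k v)^[forestLen X] (Finsupp.single X 1))

/-- The linear map `Δ : kL → kℕ*`. -/
noncomputable def DeltaMap (k : Type) [Ring k] : ((List LTree) →₀ k) →ₗ[k] ((List ℕ) →₀ k) :=
  (Finsupp.lift ((List ℕ) →₀ k) k (List LTree)) (DeltaComp k)

/-! ## Pólya orbit sums and products on the spans -/

/-- The Pólya orbit sum `[X]` of a labeled forest: the sum of all distinct
rearrangements of its parts. -/
noncomputable def pol (k : Type) [Semiring k] (X : List LTree) : (List LTree) →₀ k :=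
  ∑ Y ∈ X.permutations.toFinset, Finsupp.single Y 1

/-- The Pólya orbit sum of an unlabeled forest. -/
noncomputable def polU (k : Type) [Semiring k] (X : List UTree) : (List UTree) →₀ k :=
  ∑ Y ∈ X.permutations.toFinset, Finsupp.single Y 1

/-- The bilinear product on `kL`: `X • Y` when foliage of `X` equals squash of `Y`,
and `0` otherwise. -/
noncomputable def mulL (k : Type) [Semiring k] (f g : (List LTree) →₀ k) : (List LTree) →₀ k :=
  f.sum fun X a => g.sum fun Y b =>
    if forestFoliage X = squash Y then Finsupp.single (bullet X Y) (a * b) else 0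

/-- The bilinear product on `kM` (unlabeled forests). -/
noncomputable def mulM (k : Type) [Semiring k] (f g : (List UTree) →₀ k) : (List UTree) →₀ k :=
  f.sum fun X a => g.sum fun Y b =>
    if foliageU X = squashU Y then Finsupp.single (bulletU X Y) (a * b) else 0

/-- The concatenation product on `kM`. -/
noncomputable def mulCat (k : Type) [Semiring k] (f g : (List UTree) →₀ k) : (List UTree) →₀ k :=
  f.sum fun X a => g.sum fun Y b => Finsupp.single (X ++ Y) (a * b)

/-- The product on the free associative algebra `kℕ*` (concatenation of compositions). -/
noncomputable def mulComp (k : Type) [Semiring k] (f g : (List ℕ) →₀ k) : (List ℕ) →₀ k :=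
  f.sum fun u a => g.sum fun v b => Finsupp.single (u ++ v) (a * b)

/-- The linear map `E : kL → kM` erasing node labels. -/
noncomputable def EL (k : Type) [Semiring k] : ((List LTree) →₀ k) →ₗ[k] ((List UTree) →₀ k) :=
  Finsupp.lmapDomain k k eraseF

/-- `π` on a single unlabeled tree: replace every node by the Lie bracket. -/
noncomputable def piT (k : Type) [Ring k] : UTree → (List ℕ) →₀ k
  | .leaf x => Finsupp.single [x] 1
  | .node t1 t2 => mulComp k (piT k t1) (piT k t2) - mulComp k (piT k t2) (piT k t1)

/-- `π` on an unlabeled forest: the concatenation product of the images of its parts. -/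
noncomputable def piF (k : Type) [Ring k] (X : List UTree) : (List ℕ) →₀ k :=
  (X.map (piT k)).foldr (mulComp k) (Finsupp.single [] 1)

/-- The Pólya action of a permutation of `Fin j` on a list: the entry in position
`i` of the result is the entry in position `σ⁻¹ i` of the input. -/
def permuteL {α : Type} [Inhabited α] {j : ℕ} (σ : Equiv.Perm (Fin j)) (X : List α) :
    List α :=
  List.ofFn fun i => X.getD ((σ⁻¹ i : Fin j) : ℕ) default
/-! ## The quiver Q, its paths, and the map ι -/

/-- The partition obtained by splitting one part `a+b` into parts `a` and `b`. -/
def applyStep (a b : ℕ) (p : Multiset ℕ) : Multiset ℕ := a ::ₘ b ::ₘ p.erase (a + b)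

/-- The vertex reached from `p` after performing the given splitting steps. -/
def sourceAfter (p : Multiset ℕ) (steps : List (ℕ × ℕ)) : Multiset ℕ :=
  steps.foldl (fun q s => applyStep s.1 s.2 q) p

/-- A path in the quiver `Q`, recorded by its destination vertex (a partition,
i.e. a multiset of parts) together with the list of branch symbols `[aᵢ|bᵢ]`
read from the destination towards the source. -/
structure QPath where
  dest : Multiset ℕ
  steps : List (ℕ × ℕ)
  deriving DecidableEq

/-- Each step is applicable in turn. -/
def SeqOK : Multiset ℕ → List (ℕ × ℕ) → Prop
  | _, [] => True
  | p, s :: rest => s.1 + s.2 ∈ p ∧ SeqOK (applyStep s.1 s.2 p) rest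

/-- A valid path of `Q`: positive parts, each step `[a|b]` has `0 < a < b`, and the
steps apply in sequence. -/
def QPath.Valid (P : QPath) : Prop :=
  (∀ x ∈ P.dest, 0 < x) ∧ (∀ s ∈ P.steps, 0 < s.1 ∧ s.1 < s.2) ∧ SeqOK P.dest P.steps

/-- The source vertex of a path. -/
def QPath.source (P : QPath) : Multiset ℕ := sourceAfter P.dest P.steps

/-- The canonical length-one forest attached to the edge with destination `q`
splitting a part `a + b` into `a` and `b`. -/
noncomputable def edgeForest (a b : ℕ) (q : Multiset ℕ) : List LTree :=
  LTree.node 1 (LTree.leaf a) (LTree.leaf b) :: leavesOf (q.erase (a + b)).toList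

/-- `ι` on the path with destination `p` and branch symbols `steps`:
the product (in `kℒ`) of the orbit sums of the edge forests, with the edge nearest
the destination leftmost, times the orbit sum of the source vertex. -/
noncomputable def iotaSteps (k : Type) [Semiring k] :
    Multiset ℕ → List (ℕ × ℕ) → ((List LTree) →₀ k)
  | p, [] => pol k (leavesOf p.toList)
  | p, s :: rest =>
      mulL k (pol k (edgeForest s.1 s.2 p)) (iotaSteps k (applyStep s.1 s.2 p) rest)

/-- `ι` of a single path. -/
noncomputable def iotaP (k : Type) [Semiring k] (P : QPath) : (List LTree) →₀ k :=
  iotaSteps k P.dest P.steps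

/-- The linear extension `ι : kQ → kℒ`. -/
noncomputable def iotaLinM (k : Type) [Semiring k] : (QPath →₀ k) →ₗ[k] ((List LTree) →₀ k) :=
  (Finsupp.lift ((List LTree) →₀ k) k QPath) (iotaP k)

/-! ## The branch monoid and its actions -/

/-- All ways to replace one leaf of value `a+b` in a tree by a node labeled `lab`
with leaves `a` and `b`. -/
def branchActTree (a b lab : ℕ) : LTree → List LTree
  | .leaf x =>
      if x = a + b then [LTree.node lab (LTree.leaf a) (LTree.leaf b)] else []
  | .node i t1 t2 =>
      (branchActTree a b lab t1).map (fun u => LTree.node i u t2) ++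
      (branchActTree a b lab t2).map (fun u => LTree.node i t1 u)

/-- All ways to replace one leaf of value `a+b` in a forest by a node labeled `lab`. -/
def branchWays (a b lab : ℕ) : List LTree → List (List LTree)
  | [] => []
  | t :: rest =>
      (branchActTree a b lab t).map (· :: rest) ++
      (branchWays a b lab rest).map (t :: ·)

/-- The action of the branch symbol `[a|b]` on `kL`. -/
noncomputable def actL1 (k : Type) [Semiring k] (s : ℕ × ℕ) (x : (List LTree) →₀ k) :
    (List LTree) →₀ k :=
  x.sum fun X a =>
    a • ((branchWays s.1 s.2 (forestLen X + 1) X).map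
      (fun Y => Finsupp.single Y (1 : k))).sum

/-- The action of a word of the branch monoid `ℬ*` on `kL`. -/
noncomputable def actLW (k : Type) [Semiring k] (w : List (ℕ × ℕ)) (x : (List LTree) →₀ k) :
    (List LTree) →₀ k :=
  w.foldl (fun y s => actL1 k s y) x

/-- The action of the branch symbol `[a|b]` on `kQ`: prepend an edge at the source
if the source has a part `a + b`, and `0` otherwise. -/
noncomputable def actQ1 (k : Type) [Semiring k] (s : ℕ × ℕ) (x : QPath →₀ k) : QPath →₀ k :=
  x.sum fun P a =>
    if s.1 + s.2 ∈ P.source then Finsupp.single ⟨P.dest, P.steps ++ [s]⟩ a else 0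

/-- The action of a word of `ℬ*` on `kQ`. -/
noncomputable def actQW (k : Type) [Semiring k] (w : List (ℕ × ℕ)) (x : QPath →₀ k) :
    QPath →₀ k :=
  w.foldl (fun y s => actQ1 k s y) x

/-- The path `𝔭(X)` associated to an (aligned) labeled forest `X`: the destination is
the partition of the squash of `X`, and the `i`-th branch symbol records the values of
the two subtrees of the node labeled `i`. -/
noncomputable def pPath (X : List LTree) : QPath :=
  ⟨(squash X : Multiset ℕ),
    (List.range (forestLen X)).map fun i => (forestFindLab (i + 1) X).getD (0, 0)⟩
/-! ## The equivalence ∼ on labeled forests -/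

/-- The subtree of a forest at a position (part index, path in the part). -/
def forestSubtreeAt (X : List LTree) (q : ℕ × List Bool) : Option LTree :=
  if h : q.1 < X.length then (X.get ⟨q.1, h⟩).subtreeAt q.2 else none

/-- Replace the subtree at a position of a forest. -/
def forestReplaceAt (X : List LTree) (q : ℕ × List Bool) (u : LTree) : List LTree :=
  X.set q.1 ((X.getD q.1 default).replaceAt q.2 u)

/-- The label of the parent node of the position `q`, if it exists. -/
def parentLabel (X : List LTree) (q : ℕ × List Bool) : Option ℕ :=
  if q.2 = [] then none
  else (forestSubtreeAt X (q.1, q.2.dropLast)).bind LTree.rootLabel?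

/-- Two positions address disjoint subtrees. -/
def PosDisjoint (q r : ℕ × List Bool) : Prop :=
  q.1 ≠ r.1 ∨ (q.1 = r.1 ∧ ¬ q.2 <+: r.2 ∧ ¬ r.2 <+: q.2)

/-- Move (1): exchange two disjoint non-leaf subtrees `U`, `V` of equal value such that
the labels of the parents of `U` and `V` (where these exist) are smaller than the root
labels of `U` and `V`. -/
def Move1 (X Y : List LTree) : Prop :=
  ∃ (q r : ℕ × List Bool) (U V : LTree),
    PosDisjoint q r ∧
    forestSubtreeAt X q = some U ∧ forestSubtreeAt X r = some V ∧
    U.rootLabel?.isSome ∧ V.rootLabel?.isSome ∧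
    U.value = V.value ∧
    (∀ m, (parentLabel X q = some m ∨ parentLabel X r = some m) →
      ∀ j, (U.rootLabel? = some j ∨ V.rootLabel? = some j) → m < j) ∧
    Y = forestReplaceAt (forestReplaceAt X q V) r U

/-- Exchange the entries in positions `i` and `j` of a list. -/
def swapEntries (X : List LTree) (i j : ℕ) : List LTree :=
  (X.set i (X.getD j default)).set j (X.getD i default)

/-- Move (2): exchange two parts of a forest. -/
def Move2 (X Y : List LTree) : Prop :=
  ∃ i j, i < j ∧ j < X.length ∧ Y = swapEntries X i j

/-- The equivalence relation `∼` generated by the two kinds of moves. -/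
def SimRel : List LTree → List LTree → Prop :=
  Relation.ReflTransGen (fun A B => Move1 A B ∨ Move2 A B)

/-! ## The labeling map F -/

/-- Preorder labeling of an unlabeled tree, starting after label `s`; returns the
labeled tree and the last label used. -/
def labelTreeAux : ℕ → UTree → LTree × ℕ
  | s, .leaf x => (LTree.leaf x, s)
  | s, .node t1 t2 =>
    let p1 := labelTreeAux (s + 1) t1
    let p2 := labelTreeAux p1.2 t2
    (LTree.node (s + 1) p1.1 p2.1, p2.2)

def labelFAux : ℕ → List UTree → List LTree
  | _, [] => []
  | s, t :: r =>
    let p := labelTreeAux s t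
    p.1 :: labelFAux p.2 r

/-- The labeled forest `F(X)`: label the nodes of each part in prefix (preorder)
order, the nodes of each part receiving smaller labels than those of later parts. -/
def labelF (X : List UTree) : List LTree := labelFAux 0 X

/-! ## Compositions from subsets, and alleys -/

/-- The composition of `n` attached to a subset `J ⊆ {1, …, n−1}`: the list of
successive differences of `{0, n} ∪ (S ∖ J)`. -/
def phi (n : ℕ) (J : Finset ℕ) : List ℕ :=
  let ts := ((Finset.Icc 1 (n - 1)) \ J).sort (· ≤ ·)
  List.zipWith (fun a b => b - a) (0 :: ts) (ts ++ [n])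

/-- The start of the maximal block of consecutive points containing `i` linked by
the transpositions in `J` (the transposition `s` links `s` and `s+1`). -/
def bStart (J : Finset ℕ) : ℕ → ℕ
  | 0 => 0
  | 1 => 1
  | i + 2 => if (i + 1) ∈ J then bStart J (i + 1) else i + 2

/-- The end of the maximal block of consecutive points of `{1, …, n}` containing `i`
linked by the transpositions in `J`. -/
def bEnd (J : Finset ℕ) (n : ℕ) (i : ℕ) : ℕ :=
  if h : i < n ∧ i ∈ J then bEnd J n (i + 1) else i
termination_by n - i
decreasing_by
  have := h.1
  omega

/-- The longest element `w_J` of the parabolic subgroup `W_J ≤ Sₙ`, described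
explicitly as the permutation of `{1, …, n}` reversing each maximal block of
consecutive points linked by the transpositions in `J`. -/
def wJpt (n : ℕ) (J : Finset ℕ) (i : ℕ) : ℕ := bStart J i + bEnd J n i - i

/-- The permutation `ω = w_J ⬝ w_{J ∪ {t}}` (as a right action on points). -/
def omegaPt (n : ℕ) (J : Finset ℕ) (t : ℕ) (i : ℕ) : ℕ :=
  wJpt n (insert t J) (wJpt n J i)

/-- The conjugate `s^ω` of the Coxeter generator `s` by `ω = w_J w_{J∪{t}}`:
the generator whose transposition exchanges the images of `s` and `s+1`. -/
def conjGen (n : ℕ) (J : Finset ℕ) (t : ℕ) (s : ℕ) : ℕ :=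
  min (omegaPt n J t s) (omegaPt n J t (s + 1))

/-- An alley `(J; s₁, …, s_l)`. -/
structure Alley where
  J : Finset ℕ
  s : List ℕ
  deriving DecidableEq

/-- A valid alley for `Sₙ`: `J ⊆ S = {1, …, n−1}` and `s₁, …, s_l` are distinct
elements of `J`. -/
def IsAlley (n : ℕ) (a : Alley) : Prop :=
  a.J ⊆ Finset.Icc 1 (n - 1) ∧ a.s.Nodup ∧ ∀ x ∈ a.s, x ∈ a.J

/-- The action of the Coxeter generator `t` on an alley:
`(J; s₁, …, s_l).t = (J^ω; s₁^ω, …, s_l^ω)` where `ω = w_J w_{J∪{t}}`. -/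
def actAlley (n : ℕ) (t : ℕ) (a : Alley) : Alley :=
  ⟨a.J.image (conjGen n a.J t), a.s.map (conjGen n a.J t)⟩

/-- The action of a word of the free monoid `S*` on alleys. -/
def actWordA (n : ℕ) (a : Alley) (w : List ℕ) : Alley :=
  w.foldl (fun b t => actAlley n t b) a

/-- The defining property of the forest `φ(a)` attached to an alley `a = (J; s₁,…,s_l)`:
it is a labeled forest of length `l` admitting a factorization `X₁ • ⋯ • X_l` into
length-one forests with `s(Xᵢ) = φ(J ∖ {s₁,…,s_{i−1}})` and
`f(Xᵢ) = φ(J ∖ {s₁,…,sᵢ})`; for `l = 0` it is the forest of leaves `φ(J)`. -/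
def AlleySpec (n : ℕ) (a : Alley) (X : List LTree) : Prop :=
  IsLForest X ∧ forestLen X = a.s.length ∧
  ∃ F : List (List LTree), F.length = a.s.length ∧
    (∀ A ∈ F, IsLForest A ∧ forestLen A = 1) ∧
    (∀ (i : ℕ) (h : i < F.length),
      squash (F.get ⟨i, h⟩) = phi n (a.J \ (a.s.take i).toFinset) ∧
      forestFoliage (F.get ⟨i, h⟩) = phi n (a.J \ (a.s.take (i + 1)).toFinset)) ∧
    X = F.foldr bullet (leavesOf (phi n (a.J \ a.s.toFinset)))
/-! ## The descent algebra of the symmetric group -/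

/-- `w ∈ X_J`: every descent of `w` (viewing `w` as a permutation of `{1, …, n}`
via `Fin n`) occurs at a position belonging to `J`. -/
def DescAllowed (n : ℕ) (J : Finset ℕ) (w : Equiv.Perm (Fin n)) : Prop :=
  ∀ i j : Fin n, (i : ℕ) + 1 = (j : ℕ) → w j < w i → ((i : ℕ) + 1) ∈ J

open Classical in
/-- The element `x_J = ∑_{w ∈ X_J} w` of the group algebra of `Sₙ`. -/
noncomputable def xJelt (k : Type) [Semiring k] (n : ℕ) (J : Finset ℕ) :
    MonoidAlgebra k (Equiv.Perm (Fin n)) :=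
  ∑ w : Equiv.Perm (Fin n),
    if DescAllowed n J w then MonoidAlgebra.single w 1 else 0

/-- The descent algebra `Σ(Sₙ)` as a submodule (by Solomon's theorem, a subalgebra)
of the group algebra: the span of the `x_J`, `J ⊆ S`. -/
noncomputable def descentSpan (k : Type) [Semiring k] (n : ℕ) :
    Submodule k (MonoidAlgebra k (Equiv.Perm (Fin n))) :=
  Submodule.span k {x | ∃ J ⊆ Finset.Icc 1 (n - 1), x = xJelt k n J}

/-! ## Spans -/

/-- `kℒₙ`: the span of Pólya orbit sums of labeled forests of value `n`. -/
noncomputable def LspanN (k : Type) [Semiring k] (n : ℕ) :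
    Submodule k ((List LTree) →₀ k) :=
  Submodule.span k {y | ∃ X, IsLForest X ∧ forestValue X = n ∧ y = pol k X}

/-- `kℒ`: the span of Pólya orbit sums of labeled forests. -/
noncomputable def LspanAll (k : Type) [Semiring k] : Submodule k ((List LTree) →₀ k) :=
  Submodule.span k {y | ∃ X, IsLForest X ∧ y = pol k X}

/-- `kℳ`: the span of Pólya orbit sums of unlabeled forests. -/
noncomputable def MspanAll (k : Type) [Semiring k] : Submodule k ((List UTree) →₀ k) :=
  Submodule.span k {y | ∃ X, IsUForest X ∧ y = polU k X}

/-- `kℒ⁺`: the span of Pólya orbit sums of aligned labeled forests. -/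
noncomputable def LplusSpan (k : Type) [Semiring k] : Submodule k ((List LTree) →₀ k) :=
  Submodule.span k {y | ∃ X, IsLForest X ∧ ForestAligned X ∧ y = pol k X}

/-- `kM⁺`: the span of aligned unlabeled forests. -/
noncomputable def MplusSpan (k : Type) [Semiring k] : Submodule k ((List UTree) →₀ k) :=
  Submodule.span k {y | ∃ X, IsUForest X ∧ ForestAlignedU X ∧ y = Finsupp.single X (1 : k)}

/-- The identity element of `kLₙ`: the sum of all compositions of `n`. -/
noncomputable def unitL (k : Type) [Semiring k] (n : ℕ) : (List LTree) →₀ k :=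
  ∑ c : Composition n, Finsupp.single (leavesOf c.blocks) 1

/-- `kQₙ`: the span of the valid paths of the quiver `Qₙ` (partitions of `n`). -/
noncomputable def QspanN (k : Type) [Semiring k] (n : ℕ) : Submodule k (QPath →₀ k) :=
  Submodule.span k
    {y | ∃ P : QPath, P.Valid ∧ P.dest.sum = n ∧ y = Finsupp.single P 1}

/-- The path-algebra product on `kQ`: the concatenation "`P` then `F`" when the
destination of `P` is the source of `F`, and `0` otherwise. -/
noncomputable def mulQ (k : Type) [Semiring k] (f g : QPath →₀ k) : QPath →₀ k :=
  f.sum fun P a => g.sum fun F b =>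
    if F.source = P.dest then Finsupp.single ⟨F.dest, F.steps ++ P.steps⟩ (a * b) else 0

/-! ## The ideals 𝒩 and 𝒥 -/

/-- The generators of the ideal `𝒩`: `(U,V) + (V,U)`. -/
def NGens (k : Type) [Semiring k] : Set ((List UTree) →₀ k) :=
  {g | ∃ U V : UTree, U.leavesPos ∧ V.leavesPos ∧
    g = Finsupp.single [UTree.node U V] 1 + Finsupp.single [UTree.node V U] 1}

/-- The generators of the ideal `𝒥`: the Jacobi sums
`(X,(Y,Z)) + (Y,(Z,X)) + (Z,(X,Y))`. -/
def JGens (k : Type) [Semiring k] : Set ((List UTree) →₀ k) :=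
  {g | ∃ X Y Z : UTree, X.leavesPos ∧ Y.leavesPos ∧ Z.leavesPos ∧
    g = Finsupp.single [UTree.node X (UTree.node Y Z)] 1 +
        Finsupp.single [UTree.node Y (UTree.node Z X)] 1 +
        Finsupp.single [UTree.node Z (UTree.node X Y)] 1}

/-- The two-sided ideal `𝒩 + 𝒥` of `kM` with respect to concatenation. -/
noncomputable def NJideal (k : Type) [Semiring k] : Submodule k ((List UTree) →₀ k) :=
  Submodule.span k {x | ∃ (A B : List UTree) (g : (List UTree) →₀ k),
    (g ∈ NGens k ∨ g ∈ JGens k) ∧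
    x = mulCat k (Finsupp.single A (1 : k)) (mulCat k g (Finsupp.single B 1))}

/-! ## Branch relations -/

/-- The two-term branch relation `[a|b][c|d] − [c|d][a|b]`. -/
noncomputable def Rel1 (k : Type) [Ring k] (a b c d : ℕ) : (List (ℕ × ℕ)) →₀ k :=
  Finsupp.single [(a, b), (c, d)] 1 - Finsupp.single [(c, d), (a, b)] 1

/-- The three-term branch relation
`[a|b][c|d][x|y] + [x|y][a|b][c|d] − [a|b][x|y][c|d] − [c|d][x|y][a|b]`. -/
noncomputable def Rel2 (k : Type) [Ring k] (a b c d x y : ℕ) : (List (ℕ × ℕ)) →₀ k :=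
  Finsupp.single [(a, b), (c, d), (x, y)] 1 + Finsupp.single [(x, y), (a, b), (c, d)] 1
  - Finsupp.single [(a, b), (x, y), (c, d)] 1 - Finsupp.single [(c, d), (x, y), (a, b)] 1

/-- The side condition on `a, b, c, d`: positive, `a < b`, `c < d`,
`a+b ∉ {c,d}` and `c+d ∉ {a,b}`. -/
def Cond1 (a b c d : ℕ) : Prop :=
  0 < a ∧ a < b ∧ 0 < c ∧ c < d ∧ a + b ≠ c ∧ a + b ≠ d ∧ c + d ≠ a ∧ c + d ≠ b

/-- The set `ℛ ⊆ kℬ*` of branch relations. -/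
noncomputable def BranchRels (k : Type) [Ring k] : Set ((List (ℕ × ℕ)) →₀ k) :=
  {r | ∃ a b c d, Cond1 a b c d ∧ r = Rel1 k a b c d} ∪
  {r | ∃ a b c d x y, Cond1 a b c d ∧ 0 < x ∧ x < y ∧
    ((a + b = c + d ∧ (a + b = x ∨ a + b = y)) ∨
      ((x + y = a ∨ x + y = b) ∧ (x + y = c ∨ x + y = d))) ∧
    r = Rel2 k a b c d x y}
/-! ### Auxiliary development for `iota_image_aligned` -/

namespace IotaAux

open LTree

/-- shorthand -/
local notation "sh" => LTree.shift 1

lemma value_shift (m : ℕ) : ∀ t : LTree, (t.shift m).value = t.value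
  | .leaf _ => rfl
  | .node i t1 t2 => by
    simp [LTree.shift, LTree.value, value_shift m t1, value_shift m t2]

lemma numNodes_shift (m : ℕ) : ∀ t : LTree, (t.shift m).numNodes = t.numNodes
  | .leaf _ => rfl
  | .node i t1 t2 => by
    simp [LTree.shift, LTree.numNodes, numNodes_shift m t1, numNodes_shift m t2]

lemma foliage_shift (m : ℕ) : ∀ t : LTree, (t.shift m).foliage = t.foliage
  | .leaf _ => rfl
  | .node i t1 t2 => by
    simp [LTree.shift, LTree.foliage, foliage_shift m t1, foliage_shift m t2]

lemma labels_shift (m : ℕ) : ∀ t : LTree, (t.shift m).labels = t.labels.map (· + m)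
  | .leaf _ => rfl
  | .node i t1 t2 => by
    simp [LTree.shift, LTree.labels, labels_shift m t1, labels_shift m t2]

lemma dec_shift_one : ∀ t : LTree, (t.shift 1).dec = t
  | .leaf _ => rfl
  | .node i t1 t2 => by
    simp [LTree.shift, LTree.dec, dec_shift_one t1, dec_shift_one t2]

lemma aligned_shift (m : ℕ) : ∀ t : LTree, t.Aligned → (t.shift m).Aligned
  | .leaf _, _ => trivial
  | .node i t1 t2, h => by
    obtain ⟨h1, h2, h3⟩ := h
    exact ⟨by rw [value_shift, value_shift]; exact h1, aligned_shift m t1 h2,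
      aligned_shift m t2 h3⟩

lemma incrFrom_mono : ∀ (t : LTree) {n n' : ℕ}, n' ≤ n → t.incrFrom n → t.incrFrom n'
  | .leaf _, _, _, _, _ => trivial
  | .node i t1 t2, n, n', hle, h => by
    obtain ⟨h1, h2, h3⟩ := h
    exact ⟨lt_of_le_of_lt hle h1, h2, h3⟩

lemma incrFrom_shift (m : ℕ) : ∀ (t : LTree) {n : ℕ}, t.incrFrom n → (t.shift m).incrFrom (n + m)
  | .leaf _, _, _ => trivial
  | .node i t1 t2, n, h => by
    obtain ⟨h1, h2, h3⟩ := h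
    exact ⟨by omega, incrFrom_shift m t1 h2, incrFrom_shift m t2 h3⟩

lemma labels_lt : ∀ (t : LTree) {n : ℕ}, t.incrFrom n → ∀ j ∈ t.labels, n < j
  | .leaf _, _, _, j, hj => by simp [LTree.labels] at hj
  | .node i t1 t2, n, h, j, hj => by
    obtain ⟨h1, h2, h3⟩ := h
    simp only [LTree.labels, List.mem_cons, List.mem_append] at hj
    rcases hj with rfl | hj | hj
    · exact h1
    · exact lt_trans h1 (labels_lt t1 h2 j hj)
    · exact lt_trans h1 (labels_lt t2 h3 j hj)

lemma notroot1_shift (t : LTree) (h : t.incrFrom 0) : (t.shift 1).rootLabel? ≠ some 1 := by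
  cases t with
  | leaf x => simp [LTree.shift, LTree.rootLabel?]
  | node i t1 t2 =>
    obtain ⟨h1, -, -⟩ := h
    simp only [LTree.shift, LTree.rootLabel?, ne_eq, Option.some.injEq]
    omega

lemma shift_dec (t : LTree) (h : ∀ j ∈ t.labels, 1 ≤ j) : (t.dec).shift 1 = t := by
  induction t with
  | leaf x => rfl
  | node i t1 t2 ih1 ih2 =>
    simp only [LTree.labels, List.mem_cons, List.mem_append] at h
    have hi : 1 ≤ i := h i (Or.inl rfl)
    simp only [LTree.dec, LTree.shift, LTree.node.injEq]
    refine ⟨by omega, ih1 fun j hj => h j (Or.inr (Or.inl hj)),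
      ih2 fun j hj => h j (Or.inr (Or.inr hj))⟩

/-! forest-level basics -/

lemma squash_append (A B : List LTree) : squash (A ++ B) = squash A ++ squash B :=
  List.map_append

lemma forestFoliage_cons (t : LTree) (T : List LTree) :
    forestFoliage (t :: T) = t.foliage ++ forestFoliage T := by
  simp [forestFoliage]

lemma forestFoliage_append (A B : List LTree) :
    forestFoliage (A ++ B) = forestFoliage A ++ forestFoliage B := by
  simp [forestFoliage]

lemma forestLabels_cons (t : LTree) (T : List LTree) :
    forestLabels (t :: T) = t.labels ++ forestLabels T := by
  simp [forestLabels]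

lemma forestLabels_append (A B : List LTree) :
    forestLabels (A ++ B) = forestLabels A ++ forestLabels B := by
  simp [forestLabels]

lemma forestLen_cons (t : LTree) (T : List LTree) :
    forestLen (t :: T) = t.numNodes + forestLen T := by
  simp [forestLen]

lemma forestLen_append (A B : List LTree) :
    forestLen (A ++ B) = forestLen A + forestLen B := by
  simp [forestLen]

lemma squash_map_shift (m : ℕ) (Y : List LTree) : squash (Y.map (LTree.shift m)) = squash Y := by
  simp only [squash, List.map_map]
  exact List.map_congr_left fun t _ => value_shift m t

lemma forestLen_map_shift (m : ℕ) (Y : List LTree) :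
    forestLen (Y.map (LTree.shift m)) = forestLen Y := by
  simp only [forestLen, List.map_map]
  congr 1
  exact List.map_congr_left fun t _ => numNodes_shift m t

lemma forestFoliage_map_shift (m : ℕ) (Y : List LTree) :
    forestFoliage (Y.map (LTree.shift m)) = forestFoliage Y := by
  induction Y with
  | nil => rfl
  | cons t T ih => simp [forestFoliage_cons, ih, foliage_shift]

lemma forestLabels_map_shift (m : ℕ) (Y : List LTree) :
    forestLabels (Y.map (LTree.shift m)) = (forestLabels Y).map (· + m) := by
  induction Y with
  | nil => rfl
  | cons t T ih => simp [forestLabels_cons, ih, labels_shift]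

lemma squash_leaves (c : List ℕ) : squash (c.map LTree.leaf) = c := by
  simp only [squash, List.map_map]
  exact (List.map_congr_left fun t _ => rfl).trans (List.map_id _)

lemma forestFoliage_leaves (c : List ℕ) : forestFoliage (c.map LTree.leaf) = c := by
  induction c with
  | nil => rfl
  | cons x r ih => simp [forestFoliage, LTree.foliage] at ih ⊢; exact ih

lemma forestLen_leaves (c : List ℕ) : forestLen (c.map LTree.leaf) = 0 := by
  induction c with
  | nil => rfl
  | cons x r ih => simpa [forestLen_cons, LTree.numNodes] using ih

lemma forestLabels_leaves (c : List ℕ) : forestLabels (c.map LTree.leaf) = [] := by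
  induction c with
  | nil => rfl
  | cons x r ih => simpa [forestLabels_cons, LTree.labels] using ih

/-! ### list helpers -/

lemma getD_mid (l1 l2 : List LTree) (x d : LTree) : (l1 ++ x :: l2).getD l1.length d = x := by
  rw [List.getD_append_right l1 _ d _ le_rfl]; simp

lemma getD_mid2 (l1 l2 : List LTree) (x y d : LTree) :
    (l1 ++ x :: y :: l2).getD (l1.length + 1) d = y := by
  rw [List.getD_append_right l1 _ d _ (by omega)]
  have h : l1.length + 1 - l1.length = 1 := by omega
  rw [h]; rfl

lemma split_unique (pr : LTree → Prop) :
    ∀ (l1 : List LTree) {l1' l2 l2' : List LTree} {x x' : LTree}, pr x → pr x' →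
      (∀ y ∈ l1, ¬ pr y) → (∀ y ∈ l1', ¬ pr y) →
      l1 ++ x :: l2 = l1' ++ x' :: l2' → l1 = l1' ∧ x = x' ∧ l2 = l2' := by
  intro l1
  induction l1 with
  | nil =>
    intro l1' l2 l2' x x' hx hx' _ hl1' heq
    cases l1' with
    | nil => simpa using heq
    | cons c cs =>
      simp only [List.nil_append, List.cons_append, List.cons.injEq] at heq
      exact absurd (heq.1 ▸ hx) (hl1' c (by simp))
  | cons a as ih =>
    intro l1' l2 l2' x x' hx hx' hl1 hl1' heq
    cases l1' with
    | nil =>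
      simp only [List.cons_append, List.nil_append, List.cons.injEq] at heq
      exact absurd (heq.1.symm ▸ hx') (hl1 a (by simp))
    | cons c cs =>
      simp only [List.cons_append, List.cons.injEq] at heq
      obtain ⟨rfl, heq2⟩ := heq
      obtain ⟨h1, h2, h3⟩ := ih hx hx' (fun y hy => hl1 y (by simp [hy]))
        (fun y hy => hl1' y (by simp [hy])) heq2
      exact ⟨by rw [h1], h2, h3⟩

lemma takeWhile_middle (p : LTree → Bool) :
    ∀ (l1 : List LTree) (x : LTree) (l2 : List LTree),
      (∀ y ∈ l1, p y = true) → p x = false →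
      (l1 ++ x :: l2).takeWhile p = l1 := by
  intro l1
  induction l1 with
  | nil => intro x l2 _ hx; simp [List.takeWhile_cons, hx]
  | cons a as ih =>
    intro x l2 h1 hx
    have ha : p a = true := h1 a (by simp)
    simp only [List.cons_append, List.takeWhile_cons, ha, if_true]
    rw [ih x l2 (fun y hy => h1 y (by simp [hy])) hx]

lemma decompose_getD (Y : List LTree) (i : ℕ) (hi : i + 2 ≤ Y.length) :
    Y = Y.take i ++ Y.getD i default :: Y.getD (i+1) default :: Y.drop (i+2) ∧
      (Y.take i).length = i := by
  have h1 : i < Y.length := by omega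
  have h2 : i + 1 < Y.length := by omega
  have e1 : Y.getD i default = Y[i] := List.getD_eq_getElem Y default h1
  have e2 : Y.getD (i+1) default = Y[i+1] := List.getD_eq_getElem Y default h2
  have e3 : Y.drop i = Y[i] :: Y.drop (i+1) := List.drop_eq_getElem_cons h1
  have e4 : Y.drop (i+1) = Y[i+1] :: Y.drop (i+2) := List.drop_eq_getElem_cons h2
  constructor
  · rw [e1, e2]
    conv_lhs => rw [← List.take_append_drop i Y]
    rw [e3, e4]
  · exact List.length_take_of_le (by omega)

/-! ### merging -/

/-- Merge the parts `i` and `i+1` of `Y` under a new root labeled `1`,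
shifting all labels of `Y` up by one. -/
def mergeAt (i : ℕ) (Y : List LTree) : List LTree :=
  (Y.take i).map (LTree.shift 1) ++
    LTree.node 1 ((Y.getD i default).shift 1) ((Y.getD (i+1) default).shift 1) ::
      (Y.drop (i+2)).map (LTree.shift 1)

lemma mergeAt_eq (Y1 Y2 : List LTree) (A B : LTree) :
    mergeAt Y1.length (Y1 ++ A :: B :: Y2) =
      Y1.map (LTree.shift 1) ++
        LTree.node 1 (A.shift 1) (B.shift 1) :: Y2.map (LTree.shift 1) := by
  unfold mergeAt
  rw [List.take_left, getD_mid, getD_mid2]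
  rw [← List.drop_drop, List.drop_left]
  rfl

/-! ### graft computations -/

lemma graft_leaf (x : ℕ) (y : LTree) (ys : List LTree) :
    (LTree.leaf x).graft (y :: ys) = (y, ys) := rfl

lemma graftForest_leaves (c : List ℕ) :
    ∀ (W : List LTree), c.length = W.length → graftForest (c.map LTree.leaf) W = W := by
  induction c with
  | nil => intro W hW; cases W with
    | nil => rfl
    | cons w ws => simp at hW
  | cons x r ih =>
    intro W hW
    cases W with
    | nil => simp at hW
    | cons w ws =>
      simp only [List.map_cons, graftForest, graft_leaf]
      rw [ih ws (by simpa using hW)]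

lemma graftForest_leaves_append (c : List ℕ) :
    ∀ (R : List LTree) (W1 W2 : List LTree), c.length = W1.length →
      graftForest (c.map LTree.leaf ++ R) (W1 ++ W2) = W1 ++ graftForest R W2 := by
  induction c with
  | nil =>
    intro R W1 W2 h
    cases W1 with
    | nil => rfl
    | cons w ws => simp at h
  | cons x r ih =>
    intro R W1 W2 h
    cases W1 with
    | nil => simp at h
    | cons w ws =>
      simp only [List.map_cons, List.cons_append, graftForest, graft_leaf, List.append_eq]
      rw [ih R ws W2 (by simpa using h)]

lemma graft_node_leaves (a b : ℕ) (A B : LTree) (rest : List LTree) :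
    (LTree.node 1 (LTree.leaf a) (LTree.leaf b)).graft (A :: B :: rest) = (LTree.node 1 A B, rest) := rfl

/-- Explicit form of the product of a permuted edge forest with a matching forest. -/
lemma bullet_eq (a b : ℕ) (c1 c2 : List ℕ) (Y1 Y2 : List LTree) (A B : LTree)
    (h1 : c1.length = Y1.length) (h2 : c2.length = Y2.length) :
    bullet (c1.map LTree.leaf ++ LTree.node 1 (LTree.leaf a) (LTree.leaf b) :: c2.map LTree.leaf)
        (Y1 ++ A :: B :: Y2) =
      Y1.map (LTree.shift 1) ++
        LTree.node 1 (A.shift 1) (B.shift 1) :: Y2.map (LTree.shift 1) := by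
  have hlen : forestLen
      (c1.map LTree.leaf ++ LTree.node 1 (LTree.leaf a) (LTree.leaf b) :: c2.map LTree.leaf) = 1 := by
    rw [forestLen_append, forestLen_cons, forestLen_leaves, forestLen_leaves]
    rfl
  unfold bullet
  rw [hlen]
  rw [List.map_append, List.map_cons, List.map_cons]
  rw [graftForest_leaves_append c1 _ (Y1.map (LTree.shift 1)) _ (by simpa using h1)]
  show _ ++ (LTree.node 1 (A.shift 1) (B.shift 1)) :: graftForest (c2.map LTree.leaf) (Y2.map (LTree.shift 1)) = _
  rw [graftForest_leaves c2 _ (by simpa using h2)]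

/-! ### permutation structure of edge forests -/

lemma exists_map_leaf (L : List LTree) (h : ∀ t ∈ L, ∃ x, t = LTree.leaf x) :
    ∃ c : List ℕ, L = c.map LTree.leaf := by
  induction L with
  | nil => exact ⟨[], rfl⟩
  | cons t T ih =>
    obtain ⟨x, rfl⟩ := h t (by simp)
    obtain ⟨c, hc⟩ := ih fun u hu => h u (by simp [hu])
    exact ⟨x :: c, by simp [hc]⟩

lemma perm_edge_struct (a b : ℕ) (q : Multiset ℕ) (X : List LTree)
    (hX : List.Perm X (edgeForest a b (a ::ₘ b ::ₘ q + {a+b} - {a} - {b}))) : True := trivial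

/-- Structure of a permutation of the edge forest. -/
lemma perm_edgeForest (a b : ℕ) (p : Multiset ℕ) (X : List LTree)
    (hX : List.Perm X (edgeForest a b p)) :
    ∃ c1 c2 : List ℕ,
      X = c1.map LTree.leaf ++ LTree.node 1 (LTree.leaf a) (LTree.leaf b) :: c2.map LTree.leaf ∧
      (↑(c1 ++ c2) : Multiset ℕ) = p.erase (a + b) := by
  set N := LTree.node 1 (LTree.leaf a) (LTree.leaf b) with hN
  have hXE : List.Perm X (N :: leavesOf (p.erase (a+b)).toList) := hX
  have hNX : N ∈ X := hXE.mem_iff.mpr (by simp)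
  obtain ⟨L1, L2, rfl⟩ := List.append_of_mem hNX
  have hperm : List.Perm (L1 ++ L2) (leavesOf (p.erase (a+b)).toList) := by
    have h1 : List.Perm (L1 ++ N :: L2) (N :: (L1 ++ L2)) := List.perm_middle
    exact (h1.symm.trans hXE).cons_inv
  have hleaves : ∀ t ∈ L1 ++ L2, ∃ x, t = LTree.leaf x := by
    intro t ht
    have := hperm.mem_iff.mp ht
    simp only [leavesOf, List.mem_map] at this
    obtain ⟨x, -, rfl⟩ := this
    exact ⟨x, rfl⟩
  obtain ⟨c1, hc1⟩ := exists_map_leaf L1 fun t ht => hleaves t (by simp [ht])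
  obtain ⟨c2, hc2⟩ := exists_map_leaf L2 fun t ht => hleaves t (by simp [ht])
  refine ⟨c1, c2, by rw [hc1, hc2], ?_⟩
  have hperm2 : List.Perm (c1 ++ c2) (p.erase (a+b)).toList := by
    have : List.Perm ((c1 ++ c2).map LTree.leaf) ((p.erase (a+b)).toList.map LTree.leaf) := by
      rw [List.map_append, ← hc1, ← hc2]; exact hperm
    have hv := this.map LTree.value
    simpa [List.map_map, Function.comp_def, LTree.value] using hv
  calc (↑(c1 ++ c2) : Multiset ℕ) = ↑(p.erase (a+b)).toList := Multiset.coe_eq_coe.mpr hperm2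
    _ = p.erase (a+b) := Multiset.coe_toList _

/-- Converse: such a list is a permutation of the edge forest. -/
lemma perm_edgeForest_of (a b : ℕ) (p : Multiset ℕ) (c1 c2 : List ℕ)
    (h : (↑(c1 ++ c2) : Multiset ℕ) = p.erase (a + b)) :
    List.Perm (c1.map LTree.leaf ++ LTree.node 1 (LTree.leaf a) (LTree.leaf b) :: c2.map LTree.leaf)
      (edgeForest a b p) := by
  set N := LTree.node 1 (LTree.leaf a) (LTree.leaf b) with hN
  have h1 : List.Perm (c1.map LTree.leaf ++ N :: c2.map LTree.leaf)
      (N :: (c1.map LTree.leaf ++ c2.map LTree.leaf)) := List.perm_middle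
  refine h1.trans (List.Perm.cons N ?_)
  rw [← List.map_append]
  have hperm : List.Perm (c1 ++ c2) (p.erase (a+b)).toList := by
    apply Multiset.coe_eq_coe.mp
    rw [h, Multiset.coe_toList]
  exact hperm.map LTree.leaf

lemma forestFoliage_edge_decomp (a b : ℕ) (c1 c2 : List ℕ) :
    forestFoliage
        (c1.map LTree.leaf ++ LTree.node 1 (LTree.leaf a) (LTree.leaf b) :: c2.map LTree.leaf) =
      c1 ++ a :: b :: c2 := by
  rw [forestFoliage_append, forestFoliage_cons, forestFoliage_leaves, forestFoliage_leaves]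
  rfl

lemma squash_getD (Y : List LTree) (i : ℕ) (hi : i < Y.length) :
    (squash Y).getD i 0 = (Y.getD i default).value := by
  have h1 : (squash Y).getD i 0 = (squash Y)[i]'(by simpa [squash] using hi) :=
    List.getD_eq_getElem _ 0 (by simpa [squash] using hi)
  have h2 : Y.getD i default = Y[i] := List.getD_eq_getElem _ _ hi
  rw [h1, h2]
  simp [squash]

/-! ### good sets and the span lemma -/

/-- A finite set of forests witnessing membership in `kℒ⁺`. -/
def GoodSet (p : Multiset ℕ) (S : Finset (List LTree)) : Prop :=
  (∀ Z ∈ S, IsLForest Z ∧ ForestAligned Z ∧ (↑(squash Z) : Multiset ℕ) = p) ∧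
  (∀ Z ∈ S, ∀ Z', List.Perm Z Z' → Z' ∈ S)

lemma goodset_subset (p : Multiset ℕ) (k : Type) [Field k] :
    ∀ (n : ℕ) (S : Finset (List LTree)), S.card ≤ n → GoodSet p S →
      (∑ Z ∈ S, Finsupp.single Z (1:k)) ∈ LplusSpan k := by
  intro n
  induction n with
  | zero =>
    intro S hcard _
    have : S = ∅ := Finset.card_eq_zero.mp (Nat.le_zero.mp hcard)
    rw [this]
    simp only [Finset.sum_empty]
    exact Submodule.zero_mem _
  | succ n ih =>
    intro S hcard hS
    rcases S.eq_empty_or_nonempty with rfl | ⟨Z, hZ⟩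
    · simp only [Finset.sum_empty]; exact Submodule.zero_mem _
    · set O := Z.permutations.toFinset with hO
      have hOsub : O ⊆ S := by
        intro Z' hZ'
        rw [hO, List.mem_toFinset, List.mem_permutations] at hZ'
        exact hS.2 Z hZ Z' hZ'.symm
      have hsplit : ∑ W ∈ S, Finsupp.single W (1:k) =
          (∑ W ∈ S \ O, Finsupp.single W (1:k)) + ∑ W ∈ O, Finsupp.single W (1:k) :=
        (Finset.sum_sdiff hOsub).symm
      have hpol : (∑ W ∈ O, Finsupp.single W (1:k)) = pol k Z := rfl
      have hmem : pol k Z ∈ LplusSpan k := by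
        apply Submodule.subset_span
        obtain ⟨hF, hA, -⟩ := hS.1 Z hZ
        exact ⟨Z, hF, hA, rfl⟩
      have hZO : Z ∈ O := by
        rw [hO, List.mem_toFinset, List.mem_permutations]
      have hcard' : (S \ O).card ≤ n := by
        have h1 : (S \ O).card = S.card - O.card := Finset.card_sdiff_of_subset hOsub
        have h2 : 1 ≤ O.card := Finset.card_pos.mpr ⟨Z, hZO⟩
        have h3 : O.card ≤ S.card := Finset.card_le_card hOsub
        omega
      have hgood : GoodSet p (S \ O) := by
        constructor
        · intro W hW
          exact hS.1 W (Finset.mem_sdiff.mp hW).1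
        · intro W hW W' hWW'
          obtain ⟨hW1, hW2⟩ := Finset.mem_sdiff.mp hW
          refine Finset.mem_sdiff.mpr ⟨hS.2 W hW1 W' hWW', ?_⟩
          intro hW'O
          apply hW2
          rw [hO, List.mem_toFinset, List.mem_permutations] at hW'O ⊢
          exact hWW'.trans hW'O
      rw [hsplit, hpol]
      exact Submodule.add_mem _ (ih (S \ O) hcard' hgood) hmem

/-! ### expanding `mulL` of sums of singles -/

lemma sum_single_one_apply (k : Type) [Field k] {β : Type} [DecidableEq β] (T : Finset β) (y : β)
    (hy : y ∈ T) : (∑ x ∈ T, Finsupp.single x (1:k)) y = 1 := by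
  rw [Finsupp.finset_sum_apply]
  rw [Finset.sum_eq_single y]
  · simp
  · intro x hx hxy
    rw [Finsupp.single_apply, if_neg hxy]
  · intro h; exact absurd hy h

lemma sum_single_one_sum (k : Type) [Field k] {β M : Type} [DecidableEq β] [AddCommMonoid M]
    (T : Finset β) (F : β → k → M) (h0 : ∀ x ∈ T, F x 0 = 0) :
    (∑ x ∈ T, Finsupp.single x (1:k)).sum F = ∑ x ∈ T, F x 1 := by
  have hsub : (∑ x ∈ T, Finsupp.single x (1:k)).support ⊆ T := by
    intro y hy
    by_contra hyT
    have : (∑ x ∈ T, Finsupp.single x (1:k)) y = 0 := by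
      rw [Finsupp.finset_sum_apply]
      apply Finset.sum_eq_zero
      intro x hx
      rw [Finsupp.single_apply, if_neg]
      rintro rfl; exact hyT hx
    exact Finsupp.mem_support_iff.mp hy this
  rw [Finsupp.sum_of_support_subset _ hsub F h0]
  apply Finset.sum_congr rfl
  intro x hx
  rw [sum_single_one_apply k T x hx]

lemma mulL_expand (k : Type) [Field k] (E : List LTree) (S : Finset (List LTree)) :
    mulL k (pol k E) (∑ Y ∈ S, Finsupp.single Y (1:k)) =
      ∑ X ∈ E.permutations.toFinset, ∑ Y ∈ S,
        if forestFoliage X = squash Y then Finsupp.single (bullet X Y) (1:k) else 0 := by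
  unfold mulL pol
  rw [sum_single_one_sum]
  · apply Finset.sum_congr rfl
    intro X hX
    rw [sum_single_one_sum]
    · apply Finset.sum_congr rfl
      intro Y hY
      simp
    · intro Y hY
      simp
  · intro X hX
    simp

/-! ### multiset helpers -/

lemma coe_split (sq1 sq2 : List ℕ) (x y : ℕ) :
    (↑(sq1 ++ x :: y :: sq2) : Multiset ℕ) = x ::ₘ y ::ₘ ((↑sq1 : Multiset ℕ) + ↑sq2) := by
  have hp : List.Perm (sq1 ++ x :: y :: sq2) (x :: y :: (sq1 ++ sq2)) :=
    List.Perm.trans List.perm_middle (List.Perm.cons x List.perm_middle)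
  rw [Multiset.coe_eq_coe.mpr hp, ← Multiset.cons_coe, ← Multiset.cons_coe, ← Multiset.coe_add]

lemma coe_split_one (sq1 sq2 : List ℕ) (x : ℕ) :
    (↑(sq1 ++ x :: sq2) : Multiset ℕ) = x ::ₘ ((↑sq1 : Multiset ℕ) + ↑sq2) := by
  have hp : List.Perm (sq1 ++ x :: sq2) (x :: (sq1 ++ sq2)) := List.perm_middle
  rw [Multiset.coe_eq_coe.mpr hp, ← Multiset.cons_coe, ← Multiset.coe_add]

lemma cancel_two (a b : ℕ) (m q : Multiset ℕ) (h : a ::ₘ b ::ₘ m = a ::ₘ b ::ₘ q) : m = q :=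
  (Multiset.cons_inj_right b).mp ((Multiset.cons_inj_right a).mp h)

lemma map_shift_cancel (L : List LTree) : (L.map (LTree.shift 1)).map LTree.dec = L := by
  rw [List.map_map]
  exact (List.map_congr_left fun t _ => dec_shift_one t).trans (List.map_id _)

lemma squash_length (Y : List LTree) : (squash Y).length = Y.length := List.length_map _

/-! ### properties of merged forests -/

lemma merge_good (a b : ℕ) (p : Multiset ℕ) (ha : 0 < a) (hab : a < b) (hmem : a + b ∈ p)
    (Y : List LTree) (i : ℕ) (hF : IsLForest Y) (hAl : ForestAligned Y)
    (hsq : (↑(squash Y) : Multiset ℕ) = a ::ₘ b ::ₘ p.erase (a + b))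
    (hi : i + 2 ≤ Y.length)
    (hva : (Y.getD i default).value = a) (hvb : (Y.getD (i+1) default).value = b) :
    IsLForest (mergeAt i Y) ∧ ForestAligned (mergeAt i Y) ∧
      (↑(squash (mergeAt i Y)) : Multiset ℕ) = p := by
  obtain ⟨hdec, hlen⟩ := decompose_getD Y i hi
  set Y1 := Y.take i with hY1
  set A := Y.getD i default with hA
  set B := Y.getD (i+1) default with hB
  set Y2 := Y.drop (i+2) with hY2
  have hZ : mergeAt i Y = Y1.map (LTree.shift 1) ++
      LTree.node 1 (A.shift 1) (B.shift 1) :: Y2.map (LTree.shift 1) := by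
    conv_lhs => rw [hdec, ← hlen]
    rw [mergeAt_eq Y1 Y2 A B]
  have hmemY : ∀ t, t ∈ Y1 ∨ t = A ∨ t = B ∨ t ∈ Y2 → t ∈ Y := by
    intro t ht
    rw [hdec]
    rcases ht with h | h | h | h
    · exact List.mem_append_left _ h
    · subst h; simp
    · subst h; simp
    · simp [h]
  obtain ⟨hinc, hlab, hfol⟩ := hF
  -- incrFrom
  have hinc' : ∀ t ∈ mergeAt i Y, t.incrFrom 0 := by
    rw [hZ]
    intro t ht
    simp only [List.mem_append, List.mem_cons, List.mem_map] at ht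
    rcases ht with ⟨u, hu, rfl⟩ | rfl | ⟨u, hu, rfl⟩
    · exact incrFrom_mono _ (Nat.zero_le 1) (incrFrom_shift 1 u (hinc u (hmemY u (Or.inl hu))))
    · exact ⟨Nat.zero_lt_one,
        incrFrom_shift 1 A (hinc A (hmemY A (Or.inr (Or.inl rfl)))),
        incrFrom_shift 1 B (hinc B (hmemY B (Or.inr (Or.inr (Or.inl rfl)))))⟩
    · exact incrFrom_mono _ (Nat.zero_le 1) (incrFrom_shift 1 u (hinc u (hmemY u (Or.inr (Or.inr (Or.inr hu))))))
  -- forest length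
  have hlenZ : forestLen (mergeAt i Y) = forestLen Y + 1 := by
    rw [hZ]
    conv_rhs => rw [hdec]
    rw [forestLen_append, forestLen_cons, forestLen_append, forestLen_cons, forestLen_cons,
      forestLen_map_shift, forestLen_map_shift]
    simp only [LTree.numNodes, numNodes_shift]
    omega
  -- labels
  have hlabZ : (forestLabels (mergeAt i Y)).Perm (List.range' 1 (forestLen (mergeAt i Y))) := by
    have hstruct : forestLabels (mergeAt i Y) =
        (forestLabels Y1).map (· + 1) ++ 1 ::
          ((A.labels.map (· + 1) ++ B.labels.map (· + 1)) ++ (forestLabels Y2).map (· + 1)) := by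
      rw [hZ, forestLabels_append, forestLabels_cons, forestLabels_map_shift,
        forestLabels_map_shift]
      simp only [LTree.labels, labels_shift]
      simp
    have hYlab : forestLabels Y =
        forestLabels Y1 ++ (A.labels ++ (B.labels ++ forestLabels Y2)) := by
      conv_lhs => rw [hdec]
      rw [forestLabels_append, forestLabels_cons, forestLabels_cons]
    have hperm1 : (forestLabels (mergeAt i Y)).Perm (1 :: (forestLabels Y).map (· + 1)) := by
      rw [hstruct]
      refine List.Perm.trans List.perm_middle ?_
      apply List.Perm.cons
      rw [hYlab]
      simp [List.map_append, List.append_assoc]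
    have hperm2 : ((forestLabels Y).map (· + 1)).Perm (List.range' 2 (forestLen Y)) := by
      have := hlab.map (· + 1)
      refine this.trans ?_
      have hmr : (List.range' 1 (forestLen Y)).map (· + 1) = List.range' 2 (forestLen Y) := by
        have h := List.map_add_range' (a := 1) 1 (forestLen Y) 1
        have hfe : ((· + 1) : ℕ → ℕ) = ((1 + ·) : ℕ → ℕ) := by funext x; omega
        rw [hfe]
        exact h
      rw [hmr]
    have hrange : List.range' 1 (forestLen Y + 1) = 1 :: List.range' 2 (forestLen Y) :=
      List.range'_succ
    rw [hlenZ, hrange]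
    exact hperm1.trans (List.Perm.cons 1 hperm2)
  -- foliage
  have hfolZ : ∀ x ∈ forestFoliage (mergeAt i Y), 0 < x := by
    intro x hx
    apply hfol
    rw [hZ] at hx
    rw [forestFoliage_append, forestFoliage_cons, forestFoliage_map_shift,
      forestFoliage_map_shift] at hx
    simp only [LTree.foliage, foliage_shift] at hx
    conv_rhs at hx => skip
    rw [hdec, forestFoliage_append, forestFoliage_cons, forestFoliage_cons]
    simp only [List.mem_append] at hx ⊢
    tauto
  -- aligned
  have hAlZ : ForestAligned (mergeAt i Y) := by
    rw [hZ]
    intro t ht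
    simp only [List.mem_append, List.mem_cons, List.mem_map] at ht
    rcases ht with ⟨u, hu, rfl⟩ | rfl | ⟨u, hu, rfl⟩
    · exact aligned_shift 1 u (hAl u (hmemY u (Or.inl hu)))
    · refine ⟨?_, aligned_shift 1 A (hAl A (hmemY A (Or.inr (Or.inl rfl)))),
        aligned_shift 1 B (hAl B (hmemY B (Or.inr (Or.inr (Or.inl rfl)))))⟩
      rw [value_shift, value_shift, hva, hvb]
      exact hab
    · exact aligned_shift 1 u (hAl u (hmemY u (Or.inr (Or.inr (Or.inr hu)))))
  -- squash
  have hsqZ : (↑(squash (mergeAt i Y)) : Multiset ℕ) = p := by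
    have hsY : squash Y = squash Y1 ++ A.value :: B.value :: squash Y2 := by
      conv_lhs => rw [hdec]
      rw [squash_append]; rfl
    have hsZ : squash (mergeAt i Y) = squash Y1 ++ (a + b) :: squash Y2 := by
      rw [hZ, squash_append, squash_map_shift]
      have : squash (LTree.node 1 (A.shift 1) (B.shift 1) :: Y2.map (LTree.shift 1)) =
          (a + b) :: squash Y2 := by
        simp only [squash, List.map_cons, LTree.value, value_shift, List.map_map,
          Function.comp_def, hva, hvb]
      rw [this]
    have hm : (↑(squash Y1) : Multiset ℕ) + ↑(squash Y2) = p.erase (a + b) := by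
      apply cancel_two a b
      have hsY' : squash Y = squash Y1 ++ a :: b :: squash Y2 := by rw [hsY, hva, hvb]
      rw [← coe_split, ← hsY', hsq]
    rw [hsZ, coe_split_one, hm]
    exact Multiset.cons_erase hmem
  exact ⟨⟨hinc', hlabZ, hfolZ⟩, hAlZ, hsqZ⟩

/-! ### injectivity of merging -/

lemma mergeAt_unfold (Y : List LTree) (i : ℕ) :
    mergeAt i Y = (Y.take i).map (LTree.shift 1) ++
      LTree.node 1 ((Y.getD i default).shift 1) ((Y.getD (i+1) default).shift 1) ::
        (Y.drop (i+2)).map (LTree.shift 1) := rfl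

lemma mergeAt_inj (Y Y' : List LTree) (i i' : ℕ)
    (hY : ∀ t ∈ Y, t.incrFrom 0) (hY' : ∀ t ∈ Y', t.incrFrom 0)
    (hi : i + 2 ≤ Y.length) (hi' : i' + 2 ≤ Y'.length)
    (h : mergeAt i Y = mergeAt i' Y') : i = i' ∧ Y = Y' := by
  obtain ⟨hdec, hlen⟩ := decompose_getD Y i hi
  obtain ⟨hdec', hlen'⟩ := decompose_getD Y' i' hi'
  rw [mergeAt_unfold, mergeAt_unfold] at h
  have hmem1 : ∀ u ∈ Y.take i, u ∈ Y := fun u hu => List.mem_of_mem_take hu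
  have hmem1' : ∀ u ∈ Y'.take i', u ∈ Y' := fun u hu => List.mem_of_mem_take hu
  obtain ⟨h1, h2, h3⟩ := split_unique (fun t => t.rootLabel? = some 1) _
    (show (LTree.node 1 (((Y.getD i default)).shift 1) ((Y.getD (i+1) default).shift 1)).rootLabel?
      = some 1 from rfl)
    (show (LTree.node 1 (((Y'.getD i' default)).shift 1) ((Y'.getD (i'+1) default).shift 1)).rootLabel?
      = some 1 from rfl)
    (by
      intro y hy
      obtain ⟨u, hu, rfl⟩ := List.mem_map.mp hy
      exact notroot1_shift u (hY u (hmem1 u hu)))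
    (by
      intro y hy
      obtain ⟨u, hu, rfl⟩ := List.mem_map.mp hy
      exact notroot1_shift u (hY' u (hmem1' u hu)))
    h
  have htake : Y.take i = Y'.take i' := by
    have := congrArg (List.map LTree.dec) h1
    rwa [map_shift_cancel, map_shift_cancel] at this
  have hii : i = i' := by
    rw [← hlen, ← hlen', htake]
  have hAB : Y.getD i default = Y'.getD i' default ∧
      Y.getD (i+1) default = Y'.getD (i'+1) default := by
    have h2' := h2
    simp only [LTree.node.injEq] at h2'
    obtain ⟨-, hA, hB⟩ := h2'
    constructor
    · have := congrArg LTree.dec hA; rwa [dec_shift_one, dec_shift_one] at this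
    · have := congrArg LTree.dec hB; rwa [dec_shift_one, dec_shift_one] at this
  have hdrop : Y.drop (i+2) = Y'.drop (i'+2) := by
    have := congrArg (List.map LTree.dec) h3
    rwa [map_shift_cancel, map_shift_cancel] at this
  refine ⟨hii, ?_⟩
  rw [hdec, hdec', htake, hAB.1, hAB.2, hdrop]

/-! ### data extraction for pairs -/

lemma pair_data (a b : ℕ) (p : Multiset ℕ) (X Y : List LTree)
    (hX : List.Perm X (edgeForest a b p))
    (hcond : forestFoliage X = squash Y) :
    ∃ i, (X.takeWhile (fun t => t ≠ LTree.node 1 (LTree.leaf a) (LTree.leaf b))).length = i ∧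
      i + 2 ≤ Y.length ∧ (Y.getD i default).value = a ∧ (Y.getD (i+1) default).value = b ∧
      bullet X Y = mergeAt i Y ∧
      X = (Y.take i).map (fun t => LTree.leaf t.value) ++
        LTree.node 1 (LTree.leaf a) (LTree.leaf b) ::
          (Y.drop (i+2)).map (fun t => LTree.leaf t.value) := by
  obtain ⟨c1, c2, hXeq, hc⟩ := perm_edgeForest a b p X hX
  have hfolX : forestFoliage X = c1 ++ a :: b :: c2 := by
    rw [hXeq]; exact forestFoliage_edge_decomp a b c1 c2
  have hsqY : squash Y = c1 ++ a :: b :: c2 := by rw [← hcond, hfolX]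
  have hYlen : c1.length + 2 ≤ Y.length := by
    have h := congrArg List.length hsqY
    rw [squash_length] at h
    simp only [List.length_append, List.length_cons] at h
    omega
  obtain ⟨hdec, hlen⟩ := decompose_getD Y c1.length hYlen
  set i := c1.length with hidef
  have hsq2 : squash Y = squash (Y.take i) ++ (Y.getD i default).value ::
      (Y.getD (i+1) default).value :: squash (Y.drop (i+2)) := by
    conv_lhs => rw [hdec]
    rw [squash_append]; rfl
  have hlensq : c1.length = (squash (Y.take i)).length := by rw [squash_length, hlen]
  obtain ⟨hc1, hrest⟩ := List.append_inj (hsqY.symm.trans hsq2) hlensq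
  have hva : (Y.getD i default).value = a := by
    simp only [List.cons.injEq] at hrest; exact hrest.1.symm
  have hvb : (Y.getD (i+1) default).value = b := by
    simp only [List.cons.injEq] at hrest; exact hrest.2.1.symm
  have hc2 : c2 = squash (Y.drop (i+2)) := by
    simp only [List.cons.injEq] at hrest; exact hrest.2.2
  have hmapc1 : c1.map LTree.leaf = (Y.take i).map (fun t => LTree.leaf t.value) := by
    rw [hc1]; simp [squash, List.map_map, Function.comp_def]
  have hmapc2 : c2.map LTree.leaf = (Y.drop (i+2)).map (fun t => LTree.leaf t.value) := by
    rw [hc2]; simp [squash, List.map_map, Function.comp_def]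
  refine ⟨i, ?_, hYlen, hva, hvb, ?_, ?_⟩
  · -- takeWhile
    rw [hXeq]
    rw [takeWhile_middle _ (c1.map LTree.leaf) _ (c2.map LTree.leaf) ?_ ?_]
    · rw [List.length_map]
    · intro y hy
      obtain ⟨x, -, rfl⟩ := List.mem_map.mp hy
      simp
    · simp
  · -- bullet = mergeAt
    have hb := bullet_eq a b c1 c2 (Y.take i) (Y.drop (i+2))
      (Y.getD i default) (Y.getD (i+1) default)
      (by rw [hlen]) (by rw [hc2, squash_length])
    rw [hXeq]
    conv_lhs => rw [hdec]
    rw [hb, mergeAt_unfold]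
  · rw [hXeq, hmapc1, hmapc2]

lemma data_pair (a b : ℕ) (p : Multiset ℕ) (hmem : a + b ∈ p) (Y : List LTree) (i : ℕ)
    (X : List LTree)
    (hXdef : X = (Y.take i).map (fun t => LTree.leaf t.value) ++
      LTree.node 1 (LTree.leaf a) (LTree.leaf b) ::
        (Y.drop (i+2)).map (fun t => LTree.leaf t.value))
    (hsq : (↑(squash Y) : Multiset ℕ) = a ::ₘ b ::ₘ p.erase (a + b))
    (hi : i + 2 ≤ Y.length)
    (hva : (Y.getD i default).value = a) (hvb : (Y.getD (i+1) default).value = b) :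
    List.Perm X (edgeForest a b p) ∧ forestFoliage X = squash Y ∧
      (X.takeWhile (fun t => t ≠ LTree.node 1 (LTree.leaf a) (LTree.leaf b))).length = i := by
  obtain ⟨hdec, hlen⟩ := decompose_getD Y i hi
  set c1 := squash (Y.take i) with hc1
  set c2 := squash (Y.drop (i+2)) with hc2
  have hmapc1 : c1.map LTree.leaf = (Y.take i).map (fun t => LTree.leaf t.value) := by
    simp [hc1, squash, List.map_map, Function.comp_def]
  have hmapc2 : c2.map LTree.leaf = (Y.drop (i+2)).map (fun t => LTree.leaf t.value) := by
    simp [hc2, squash, List.map_map, Function.comp_def]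
  have hXeq : X = c1.map LTree.leaf ++ LTree.node 1 (LTree.leaf a) (LTree.leaf b) ::
      c2.map LTree.leaf := by rw [hXdef, hmapc1, hmapc2]
  have hsq2 : squash Y = c1 ++ a :: b :: c2 := by
    conv_lhs => rw [hdec]
    rw [squash_append, ← hva, ← hvb]; rfl
  have hmult : (↑(c1 ++ c2) : Multiset ℕ) = p.erase (a + b) := by
    have h1 : a ::ₘ b ::ₘ ((↑c1 : Multiset ℕ) + ↑c2) = a ::ₘ b ::ₘ p.erase (a + b) := by
      rw [← coe_split, ← hsq2, hsq]
    have h2 := cancel_two a b _ _ h1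
    rw [show (↑(c1 ++ c2) : Multiset ℕ) = ↑c1 + ↑c2 by simp, h2]
  refine ⟨?_, ?_, ?_⟩
  · rw [hXeq]; exact perm_edgeForest_of a b p c1 c2 hmult
  · rw [hXeq, forestFoliage_edge_decomp, hsq2]
  · rw [hXeq]
    rw [takeWhile_middle _ (c1.map LTree.leaf) _ (c2.map LTree.leaf) ?_ ?_]
    · rw [List.length_map, hc1, squash_length, hlen]
    · intro y hy
      obtain ⟨x, -, rfl⟩ := List.mem_map.mp hy
      simp
    · simp

/-! ### the main step lemma -/

lemma step_lemma (k : Type) [Field k] (a b : ℕ) (p : Multiset ℕ)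
    (ha : 0 < a) (hab : a < b) (hmem : a + b ∈ p)
    (S : Finset (List LTree)) (hS : GoodSet (applyStep a b p) S) :
    ∃ S' : Finset (List LTree), GoodSet p S' ∧
      mulL k (pol k (edgeForest a b p)) (∑ Y ∈ S, Finsupp.single Y (1:k)) =
        ∑ Z ∈ S', Finsupp.single Z (1:k) := by
  classical
  have happ : applyStep a b p = a ::ₘ b ::ₘ p.erase (a + b) := rfl
  set N := LTree.node 1 (LTree.leaf a) (LTree.leaf b) with hN
  set nB := Multiset.card (applyStep a b p) with hnB
  have hsqY : ∀ Y ∈ S, (↑(squash Y) : Multiset ℕ) = a ::ₘ b ::ₘ p.erase (a + b) := by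
    intro Y hY
    rw [← happ]
    exact (hS.1 Y hY).2.2
  have hlenY : ∀ Y ∈ S, Y.length = nB := by
    intro Y hY
    have h2 := congrArg Multiset.card ((hS.1 Y hY).2.2)
    rwa [Multiset.coe_card, squash_length] at h2
  set D : Finset (List LTree × ℕ) := (S ×ˢ Finset.range nB).filter
    (fun z => z.2 + 2 ≤ z.1.length ∧ (z.1.getD z.2 default).value = a ∧
      (z.1.getD (z.2 + 1) default).value = b) with hD
  have hDmem : ∀ z : List LTree × ℕ, z ∈ D ↔ (z.1 ∈ S ∧ z.2 < nB) ∧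
      z.2 + 2 ≤ z.1.length ∧ (z.1.getD z.2 default).value = a ∧
      (z.1.getD (z.2 + 1) default).value = b := by
    intro z
    rw [hD, Finset.mem_filter, Finset.mem_product, Finset.mem_range]
  have hgoodZ : ∀ z ∈ D, IsLForest (mergeAt z.2 z.1) ∧ ForestAligned (mergeAt z.2 z.1) ∧
      (↑(squash (mergeAt z.2 z.1)) : Multiset ℕ) = p := by
    intro z hz
    rw [hDmem] at hz
    obtain ⟨⟨hzS, -⟩, hzl, hzva, hzvb⟩ := hz
    exact merge_good a b p ha hab hmem z.1 z.2 (hS.1 z.1 hzS).1 (hS.1 z.1 hzS).2.1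
      (hsqY z.1 hzS) hzl hzva hzvb
  set S' := D.image (fun z : List LTree × ℕ => mergeAt z.2 z.1) with hS'
  refine ⟨S', ⟨?_, ?_⟩, ?_⟩
  · -- forests in S' are good
    intro Z hZ
    obtain ⟨z, hzD, rfl⟩ := Finset.mem_image.mp hZ
    exact hgoodZ z hzD
  · -- S' is closed under permutation
    intro Z hZ Z' hperm
    obtain ⟨z, hzD, hzZ⟩ := Finset.mem_image.mp hZ
    subst hzZ
    have hzD' := (hDmem z).mp hzD
    obtain ⟨⟨hzS, hznB⟩, hzl, hzva, hzvb⟩ := hzD'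
    obtain ⟨hdec, hlen⟩ := decompose_getD z.1 z.2 hzl
    set Y1 := z.1.take z.2 with hY1
    set A := z.1.getD z.2 default with hA
    set B := z.1.getD (z.2 + 1) default with hB
    set Y2 := z.1.drop (z.2 + 2) with hY2
    set M := LTree.node 1 (A.shift 1) (B.shift 1) with hM
    have hZform : mergeAt z.2 z.1 = Y1.map (LTree.shift 1) ++ M :: Y2.map (LTree.shift 1) :=
      mergeAt_unfold z.1 z.2
    have hMZ' : M ∈ Z' := by
      apply hperm.mem_iff.mp
      rw [hZform]
      simp
    obtain ⟨T1, T2, hZ'eq⟩ := List.append_of_mem hMZ'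
    have hW : List.Perm (T1 ++ T2) (Y1.map (LTree.shift 1) ++ Y2.map (LTree.shift 1)) := by
      have p1 : List.Perm Z' (M :: (T1 ++ T2)) := by rw [hZ'eq]; exact List.perm_middle
      have p2 : List.Perm (mergeAt z.2 z.1)
          (M :: (Y1.map (LTree.shift 1) ++ Y2.map (LTree.shift 1))) := by
        rw [hZform]; exact List.perm_middle
      exact ((p1.symm.trans hperm.symm).trans p2).cons_inv
    have hTsh : ∀ t ∈ T1 ++ T2, ∃ u ∈ z.1, t = u.shift 1 := by
      intro t ht
      have ht2 := hW.mem_iff.mp ht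
      rw [List.mem_append] at ht2
      rcases ht2 with ht2 | ht2
      · obtain ⟨u, hu, rfl⟩ := List.mem_map.mp ht2
        exact ⟨u, List.mem_of_mem_take hu, rfl⟩
      · obtain ⟨u, hu, rfl⟩ := List.mem_map.mp ht2
        exact ⟨u, List.mem_of_mem_drop hu, rfl⟩
    have hshdec : ∀ (T : List LTree), (∀ t ∈ T, ∃ u ∈ z.1, t = u.shift 1) →
        (T.map LTree.dec).map (LTree.shift 1) = T := by
      intro T hT
      rw [List.map_map]
      refine (List.map_congr_left ?_).trans (List.map_id T)
      intro t ht
      obtain ⟨u, -, rfl⟩ := hT t ht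
      show ((u.shift 1).dec).shift 1 = u.shift 1
      rw [dec_shift_one]
    set Y' := T1.map LTree.dec ++ A :: B :: T2.map LTree.dec with hY'
    have hpermY' : List.Perm Y' z.1 := by
      have e1 : List.Perm Y' (A :: B :: (T1.map LTree.dec ++ T2.map LTree.dec)) :=
        List.perm_middle.trans (List.Perm.cons A List.perm_middle)
      have e2 : List.Perm (T1.map LTree.dec ++ T2.map LTree.dec) (Y1 ++ Y2) := by
        rw [← List.map_append]
        have h3 := hW.map LTree.dec
        rwa [show List.map LTree.dec (Y1.map (LTree.shift 1) ++ Y2.map (LTree.shift 1)) =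
          Y1 ++ Y2 by rw [List.map_append, map_shift_cancel, map_shift_cancel]] at h3
      have e3 : List.Perm z.1 (A :: B :: (Y1 ++ Y2)) := by
        conv_lhs => rw [hdec]
        exact List.perm_middle.trans (List.Perm.cons A List.perm_middle)
      exact (e1.trans ((e2.cons B).cons A)).trans e3.symm
    have hY'S : Y' ∈ S := hS.2 z.1 hzS Y' hpermY'.symm
    have hT1len : (T1.map LTree.dec).length = T1.length := List.length_map _
    have hY'len : Y'.length = z.1.length := hpermY'.length_eq
    have hT12 : T1.length + T2.length = Y1.length + Y2.length := by
      have := hW.length_eq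
      simpa using this
    have hilen' : T1.length + 2 ≤ Y'.length := by
      rw [hY']
      simp only [List.length_append, List.length_cons, List.length_map]
      omega
    have hgetA : Y'.getD T1.length default = A := by
      rw [hY', ← hT1len]
      exact getD_mid _ _ _ _
    have hgetB : Y'.getD (T1.length + 1) default = B := by
      rw [hY', ← hT1len]
      exact getD_mid2 _ _ _ _ _
    have hmemD' : (Y', T1.length) ∈ D := by
      rw [hDmem]
      refine ⟨⟨hY'S, ?_⟩, hilen', by rw [hgetA]; exact hzva, by rw [hgetB]; exact hzvb⟩
      have := hlenY Y' hY'S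
      omega
    have hmergeY' : mergeAt T1.length Y' = Z' := by
      have h4 : mergeAt (T1.map LTree.dec).length
          (T1.map LTree.dec ++ A :: B :: T2.map LTree.dec) =
          (T1.map LTree.dec).map (LTree.shift 1) ++
            LTree.node 1 (A.shift 1) (B.shift 1) :: (T2.map LTree.dec).map (LTree.shift 1) :=
        mergeAt_eq _ _ _ _
      rw [hY', ← hT1len, h4,
        hshdec T1 (fun t ht => hTsh t (List.mem_append_left _ ht)),
        hshdec T2 (fun t ht => hTsh t (List.mem_append_right _ ht)), hZ'eq]
    rw [hS']
    apply Finset.mem_image.mpr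
    exact ⟨(Y', T1.length), hmemD', hmergeY'⟩
  · -- the sum identity
    rw [mulL_expand k (edgeForest a b p) S]
    have hstep1 : (∑ X ∈ (edgeForest a b p).permutations.toFinset, ∑ Y ∈ S,
        if forestFoliage X = squash Y then Finsupp.single (bullet X Y) (1:k) else 0) =
        ∑ z ∈ ((edgeForest a b p).permutations.toFinset ×ˢ S).filter
          (fun z => forestFoliage z.1 = squash z.2),
          Finsupp.single (bullet z.1 z.2) (1:k) := by
      rw [Finset.sum_filter, Finset.sum_product]
    rw [hstep1]
    have hstep2 : (∑ z ∈ ((edgeForest a b p).permutations.toFinset ×ˢ S).filter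
          (fun z => forestFoliage z.1 = squash z.2),
          Finsupp.single (bullet z.1 z.2) (1:k)) =
        ∑ z ∈ D, Finsupp.single (mergeAt z.2 z.1) (1:k) := by
      apply Finset.sum_nbij'
        (i := fun z => (z.2, (z.1.takeWhile (fun t => t ≠ N)).length))
        (j := fun w => ((w.1.take w.2).map (fun t => LTree.leaf t.value) ++
          N :: (w.1.drop (w.2 + 2)).map (fun t => LTree.leaf t.value), w.1))
      · -- maps into D
        intro z hz
        rw [Finset.mem_filter, Finset.mem_product, List.mem_toFinset,
          List.mem_permutations] at hz
        obtain ⟨⟨hzP, hzS⟩, hzcond⟩ := hz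
        obtain ⟨i0, htw, hil, hva0, hvb0, -, -⟩ := pair_data a b p z.1 z.2 hzP hzcond
        rw [hDmem]
        simp only [hN, htw]
        refine ⟨⟨hzS, ?_⟩, hil, hva0, hvb0⟩
        have := hlenY z.2 hzS
        omega
      · -- maps back into the filter
        intro w hw
        rw [hDmem] at hw
        obtain ⟨⟨hwS, -⟩, hwl, hwva, hwvb⟩ := hw
        obtain ⟨hperm0, hcond0, -⟩ := data_pair a b p hmem w.1 w.2 _ rfl
          (hsqY w.1 hwS) hwl hwva hwvb
        rw [Finset.mem_filter, Finset.mem_product, List.mem_toFinset, List.mem_permutations]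
        exact ⟨⟨hperm0, hwS⟩, hcond0⟩
      · -- left inverse
        intro z hz
        rw [Finset.mem_filter, Finset.mem_product, List.mem_toFinset,
          List.mem_permutations] at hz
        obtain ⟨⟨hzP, hzS⟩, hzcond⟩ := hz
        obtain ⟨i0, htw, -, -, -, -, hXform⟩ := pair_data a b p z.1 z.2 hzP hzcond
        simp only [hN, htw]
        exact Prod.ext (by rw [← hXform]) rfl
      · -- right inverse
        intro w hw
        rw [hDmem] at hw
        obtain ⟨⟨hwS, -⟩, hwl, hwva, hwvb⟩ := hw
        obtain ⟨-, -, htw0⟩ := data_pair a b p hmem w.1 w.2 _ rfl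
          (hsqY w.1 hwS) hwl hwva hwvb
        simp only [hN, htw0]
      · -- values agree
        intro z hz
        rw [Finset.mem_filter, Finset.mem_product, List.mem_toFinset,
          List.mem_permutations] at hz
        obtain ⟨⟨hzP, hzS⟩, hzcond⟩ := hz
        obtain ⟨i0, htw, -, -, -, hbm, -⟩ := pair_data a b p z.1 z.2 hzP hzcond
        simp only [hN, htw]
        rw [hbm]
    rw [hstep2, hS']
    rw [Finset.sum_image]
    intro x hx y hy hxy
    have hxD := (hDmem x).mp hx
    have hyD := (hDmem y).mp hy
    obtain ⟨hii, hYY⟩ := mergeAt_inj x.1 y.1 x.2 y.2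
      (hS.1 x.1 hxD.1.1).1.1 (hS.1 y.1 hyD.1.1).1.1 hxD.2.1 hyD.2.1 hxy
    exact Prod.ext hYY hii

/-! ### base case and induction -/

lemma goodset_base (k : Type) [Field k] (p : Multiset ℕ) (hp : ∀ x ∈ p, 0 < x) :
    ∃ S : Finset (List LTree), GoodSet p S ∧
      pol k (leavesOf p.toList) = ∑ Z ∈ S, Finsupp.single Z (1:k) := by
  refine ⟨(leavesOf p.toList).permutations.toFinset, ⟨?_, ?_⟩, rfl⟩
  · intro Z hZ
    rw [List.mem_toFinset, List.mem_permutations] at hZ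
    have hleaf : ∀ t ∈ Z, ∃ x, t = LTree.leaf x := by
      intro t ht
      have h2 := hZ.mem_iff.mp ht
      simp only [leavesOf, List.mem_map] at h2
      obtain ⟨x, -, rfl⟩ := h2
      exact ⟨x, rfl⟩
    obtain ⟨c, rfl⟩ := exists_map_leaf Z hleaf
    have hcp : List.Perm c p.toList := by
      have hv := hZ.map LTree.value
      simpa [leavesOf, List.map_map, Function.comp_def, LTree.value] using hv
    refine ⟨⟨?_, ?_, ?_⟩, ?_, ?_⟩
    · intro t ht
      obtain ⟨x, -, rfl⟩ := List.mem_map.mp ht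
      trivial
    · rw [forestLabels_leaves, forestLen_leaves]
      exact List.Perm.nil
    · rw [forestFoliage_leaves]
      intro x hx
      apply hp
      rw [← Multiset.mem_toList]
      exact hcp.mem_iff.mp hx
    · intro t ht
      obtain ⟨x, -, rfl⟩ := List.mem_map.mp ht
      trivial
    · rw [squash_leaves]
      calc (↑c : Multiset ℕ) = ↑p.toList := Multiset.coe_eq_coe.mpr hcp
        _ = p := Multiset.coe_toList p
  · intro Z hZ Z' hperm
    rw [List.mem_toFinset, List.mem_permutations] at hZ ⊢
    exact hperm.symm.trans hZ

lemma iotaSteps_good (k : Type) [Field k] :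
    ∀ (steps : List (ℕ × ℕ)) (p : Multiset ℕ), (∀ x ∈ p, 0 < x) →
      (∀ s ∈ steps, 0 < s.1 ∧ s.1 < s.2) → SeqOK p steps →
      ∃ S : Finset (List LTree), GoodSet p S ∧
        iotaSteps k p steps = ∑ Z ∈ S, Finsupp.single Z (1:k) := by
  intro steps
  induction steps with
  | nil =>
    intro p hp _ _
    exact goodset_base k p hp
  | cons s rest ih =>
    intro p hp hsteps hseq
    obtain ⟨hmem, hseq'⟩ := hseq
    have hs := hsteps s (by simp)
    have hp' : ∀ x ∈ applyStep s.1 s.2 p, 0 < x := by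
      intro x hx
      rw [applyStep, Multiset.mem_cons, Multiset.mem_cons] at hx
      rcases hx with rfl | rfl | hx
      · exact hs.1
      · exact lt_trans hs.1 hs.2
      · exact hp x (Multiset.mem_of_mem_erase hx)
    obtain ⟨S, hSgood, hSeq⟩ := ih (applyStep s.1 s.2 p) hp'
      (fun t ht => hsteps t (by simp [ht])) hseq'
    obtain ⟨S', hS'good, hEq⟩ := step_lemma k s.1 s.2 p hs.1 hs.2 hmem S hSgood
    refine ⟨S', hS'good, ?_⟩
    show mulL k (pol k (edgeForest s.1 s.2 p)) (iotaSteps k (applyStep s.1 s.2 p) rest) = _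
    rw [hSeq, hEq]

end IotaAux

/-- **Lemma `ImageIotaAligned`.** `ι(kQ) ⊆ kℒ⁺`: the image under `ι` of any element
of `kQ` lies in the span of the Pólya orbit sums of aligned labeled forests. -/
theorem iota_image_aligned (k : Type) [Field k] [CharZero k]
    (x : QPath →₀ k) (hx : ∀ P ∈ x.support, P.Valid) :
    iotaLinM k x ∈ LplusSpan k := by
  classical
  have hlift : iotaLinM k x = x.sum fun P a => a • iotaP k P := by
    rw [iotaLinM]
    exact Finsupp.lift_apply _ _ _ _ _
  rw [hlift, Finsupp.sum]
  apply Submodule.sum_mem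
  intro P hP
  apply Submodule.smul_mem
  obtain ⟨hpos, hsteps, hseq⟩ := hx P hP
  obtain ⟨S, hgood, hSeq⟩ := IotaAux.iotaSteps_good k P.steps P.dest hpos hsteps hseq
  show iotaSteps k P.dest P.steps ∈ _
  rw [hSeq]
  exact IotaAux.goodset_subset P.dest k S.card S le_rfl hgood
end

section
/- The composite E ∘ ι: kQ → kℳ^+ is surjective: every Pólya orbit sum of an aligned unlabeled forest lies in E(ι(kQ)). -/
set_option maxHeartbeats 1000000

/-! ## Auxiliary development for `E_iota_surjective` -/

open Finsupp

namespace ESaux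

/-- The basic unlabeled edge tree. -/
def N0 (a b : ℕ) : UTree := UTree.node (UTree.leaf a) (UTree.leaf b)

/-- The measure: sum of squares of node numbers. -/
def muM (m : Multiset UTree) : ℕ := (m.map fun t => t.numNodes ^ 2).sum

@[simp] lemma muM_cons (t : UTree) (m : Multiset UTree) :
    muM (t ::ₘ m) = t.numNodes ^ 2 + muM m := by simp [muM]

@[simp] lemma muM_coe_cons (t : UTree) (l : List UTree) :
    muM (↑(t :: l) : Multiset UTree) = t.numNodes ^ 2 + muM ↑l := by
  rw [← Multiset.cons_coe, muM_cons]

lemma value_pos {t : UTree} (h : ∀ x ∈ t.foliage, 0 < x) : 0 < t.value := by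
  induction t with
  | leaf x => simpa [UTree.value] using h x (by simp [UTree.foliage])
  | node t1 t2 ih1 ih2 =>
    have h1 : ∀ x ∈ t1.foliage, 0 < x := fun x hx => h x (by simp [UTree.foliage, hx])
    have := ih1 h1
    simp only [UTree.value]
    omega

lemma leaf_of_numNodes_zero {t : UTree} (h : t.numNodes = 0) : t = UTree.leaf t.value := by
  cases t with
  | leaf x => rfl
  | node t1 t2 => simp [UTree.numNodes] at h

@[simp] lemma foliageU_map_leaf (l : List ℕ) :
    foliageU (l.map UTree.leaf) = l := by
  induction l with
  | nil => rfl
  | cons c l ih => simp [foliageU, UTree.foliage] at ih ⊢; exact ih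

lemma foliageU_append (X Y : List UTree) : foliageU (X ++ Y) = foliageU X ++ foliageU Y := by
  simp [foliageU]

@[simp] lemma squashU_append (X Y : List UTree) :
    squashU (X ++ Y) = squashU X ++ squashU Y := by simp [squashU]

/-! ### Grafting lemmas -/

lemma graft_snd (t : UTree) : ∀ ys : List UTree, (t.graft ys).2 = ys.drop t.foliage.length := by
  induction t with
  | leaf x => intro ys; cases ys <;> simp [UTree.graft, UTree.foliage]
  | node t1 t2 ih1 ih2 =>
    intro ys
    simp only [UTree.graft, UTree.foliage, List.length_append]
    rw [ih2, ih1, List.drop_drop, Nat.add_comm]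

lemma graftForestU_map_leaf (cs : List ℕ) : ∀ ys : List UTree, cs.length ≤ ys.length →
    graftForestU (cs.map UTree.leaf) ys = ys.take cs.length := by
  induction cs with
  | nil => intro ys _; simp [graftForestU]
  | cons c cs ih =>
    intro ys hlen
    cases ys with
    | nil => simp at hlen
    | cons y ys =>
      simp only [List.map_cons, graftForestU, UTree.graft, List.length_cons, List.take_succ_cons]
      rw [ih ys (by simpa using hlen)]

lemma graftForestU_append (X₁ X₂ : List UTree) : ∀ ys : List UTree,
    graftForestU (X₁ ++ X₂) ys
      = graftForestU X₁ ys ++ graftForestU X₂ (ys.drop (foliageU X₁).length) := by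
  induction X₁ with
  | nil => intro ys; simp [graftForestU, foliageU]
  | cons t X₁ ih =>
    intro ys
    simp only [List.cons_append, graftForestU, List.cons_append, List.append_eq]
    rw [ih, graft_snd, List.drop_drop]
    have hl : t.foliage.length + (foliageU X₁).length = (foliageU (t :: X₁)).length := by
      simp [foliageU]
    rw [hl]

lemma bullet_edge (a b : ℕ) (l₁ l₂ : List ℕ) (Ya Yb : List UTree) (u v : UTree)
    (h₁ : Ya.length = l₁.length) (h₂ : Yb.length = l₂.length) :
    bulletU (l₁.map UTree.leaf ++ N0 a b :: l₂.map UTree.leaf) (Ya ++ u :: v :: Yb)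
      = Ya ++ UTree.node u v :: Yb := by
  unfold bulletU
  rw [graftForestU_append]
  have hta : graftForestU (l₁.map UTree.leaf) (Ya ++ u :: v :: Yb) = Ya := by
    rw [graftForestU_map_leaf _ _
      (by simp only [List.length_append, List.length_cons]; omega), ← h₁, List.take_left]
  have hfol : (foliageU (l₁.map UTree.leaf)).length = Ya.length := by
    simp [h₁]
  rw [hta, hfol, List.drop_left]
  congr 1
  have : (N0 a b).graft (u :: v :: Yb) = (UTree.node u v, Yb) := by
    simp [N0, UTree.graft]
  simp only [graftForestU, this]
  rw [graftForestU_map_leaf _ _ (by omega), ← h₂, List.take_length]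

/-! ### polU lemmas -/

variable (k : Type) [Field k]

lemma polU_apply (L W : List UTree) :
    polU k L W = if W.Perm L then 1 else 0 := by
  classical
  unfold polU
  rw [Finset.sum_apply']
  simp only [Finsupp.single_apply]
  rw [Finset.sum_ite_eq' L.permutations.toFinset W (fun _ => (1:k))]
  simp [List.mem_permutations]

lemma polU_perm {L L' : List UTree} (h : L.Perm L') : polU k L = polU k L' := by
  classical
  ext W
  rw [polU_apply, polU_apply]
  have hiff : W.Perm L ↔ W.Perm L' := ⟨fun hp => hp.trans h, fun hp => hp.trans h.symm⟩
  simp only [hiff]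

/-- Decomposition of a symmetric finsupp into orbit sums. -/
lemma sym_decomp (f : (List UTree) →₀ k) (hf : ∀ W W', W.Perm W' → f W = f W') :
    ∃ R : Finset (List UTree),
      (∀ W ∈ R, W ∈ f.support) ∧
      (∀ W ∈ R, ∀ W' ∈ R, W ≠ W' → ¬ W.Perm W') ∧
      f = ∑ W ∈ R, f W • polU k W := by
  classical
  suffices H : ∀ (n : ℕ) (f : (List UTree) →₀ k), (∀ W W', W.Perm W' → f W = f W') →
      f.support.card = n → ∃ R : Finset (List UTree),
      (∀ W ∈ R, W ∈ f.support) ∧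
      (∀ W ∈ R, ∀ W' ∈ R, W ≠ W' → ¬ W.Perm W') ∧
      f = ∑ W ∈ R, f W • polU k W by exact H _ f hf rfl
  intro n
  induction n using Nat.strong_induction_on with
  | _ n ih =>
    intro f hf hn
    by_cases h0 : f = 0
    · subst h0; exact ⟨∅, by simp, by simp, by simp⟩
    · obtain ⟨W₀, hW₀⟩ := Finsupp.support_nonempty_iff.2 h0
      set g := f - f W₀ • polU k W₀ with hgdef
      have hgapp : ∀ V, g V = f V - f W₀ * (if V.Perm W₀ then 1 else 0) := by
        intro V
        simp [hgdef, polU_apply, Finsupp.sub_apply, Finsupp.smul_apply, smul_eq_mul]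
      have hgW : ∀ V, V.Perm W₀ → g V = 0 := by
        intro V hV; rw [hgapp]; simp [hV, hf V W₀ hV]
      have hgnW : ∀ V, ¬ V.Perm W₀ → g V = f V := by
        intro V hV; rw [hgapp]; simp [hV]
      have hsupp : g.support ⊆ f.support := by
        intro V hV
        rw [Finsupp.mem_support_iff] at hV ⊢
        by_cases hp : V.Perm W₀
        · exact absurd (hgW V hp) hV
        · rwa [hgnW V hp] at hV
      have hW₀g : W₀ ∉ g.support := by
        simp [Finsupp.mem_support_iff, hgW W₀ (List.Perm.refl _)]
      have hcard : g.support.card < n := by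
        rw [← hn]
        exact Finset.card_lt_card ⟨hsupp, fun hsub => hW₀g (hsub hW₀)⟩
      have hsymg : ∀ W W', W.Perm W' → g W = g W' := by
        intro W W' hWW'
        by_cases hp : W.Perm W₀
        · rw [hgW W hp, hgW W' (hWW'.symm.trans hp)]
        · rw [hgnW W hp, hgnW W' (fun hc => hp (hWW'.trans hc)), hf W W' hWW']
      obtain ⟨R, hR1, hR2, hR3⟩ := ih _ hcard g hsymg rfl
      have hW₀R : W₀ ∉ R := fun hc => hW₀g (hR1 W₀ hc)
      refine ⟨insert W₀ R, ?_, ?_, ?_⟩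
      · intro W hW
        rcases Finset.mem_insert.1 hW with rfl | hW
        · exact hW₀
        · exact hsupp (hR1 W hW)
      · intro W hW W' hW' hne hp
        rcases Finset.mem_insert.1 hW with h1 | h1 <;>
          rcases Finset.mem_insert.1 hW' with h2 | h2
        · exact hne (h1.trans h2.symm)
        · have hWW₀ : W.Perm W₀ := by rw [h1]
          have hm := hR1 W' h2
          rw [Finsupp.mem_support_iff] at hm
          exact hm (hgW W' (hp.symm.trans hWW₀))
        · have hW'W₀ : W'.Perm W₀ := by rw [h2]
          have hm := hR1 W h1
          rw [Finsupp.mem_support_iff] at hm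
          exact hm (hgW W (hp.trans hW'W₀))
        · exact hR2 W h1 W' h2 hne hp
      · rw [Finset.sum_insert hW₀R]
        have hfg : ∀ W ∈ R, f W = g W := by
          intro W hW
          have hWm := hR1 W hW
          rw [Finsupp.mem_support_iff] at hWm
          by_cases hp : W.Perm W₀
          · exact absurd (hgW W hp) hWm
          · exact (hgnW W hp).symm
        have hsum : (∑ W ∈ R, f W • polU k W) = ∑ W ∈ R, g W • polU k W :=
          Finset.sum_congr rfl fun W hW => by rw [hfg W hW]
        rw [hsum, ← hR3, hgdef]
        abel

/-! ### The central counting formula -/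

def GoodT (a b : ℕ) (Ym : Multiset UTree) (m : Multiset UTree) (t : UTree) : Prop :=
  ∃ u v, t = UTree.node u v ∧ u.value = a ∧ v.value = b ∧ u ::ₘ v ::ₘ m.erase t = Ym

open Classical in
noncomputable def posFilter (p : UTree → Prop) (W : List UTree) : Finset ℕ :=
  (Finset.range W.length).filter (fun i => ∃ t, W[i]? = Option.some t ∧ p t)

noncomputable def goodIdx (a b : ℕ) (Ym : Multiset UTree) (W : List UTree) : Finset ℕ :=
  posFilter (GoodT a b Ym (↑W)) W

lemma ite_zero_add {M : Type} [AddCommMonoid M] (c : Prop) [Decidable c] (x y : M) :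
    (if c then x + y else 0) = (if c then x else 0) + (if c then y else 0) := by
  split <;> simp

lemma mulM_zero_left (g : (List UTree) →₀ k) : mulM k 0 g = 0 := by
  unfold mulM
  exact Finsupp.sum_zero_index

lemma mulM_single_single (X Y : List UTree) (a b : k) :
    mulM k (Finsupp.single X a) (Finsupp.single Y b)
      = if foliageU X = squashU Y then Finsupp.single (bulletU X Y) (a * b) else 0 := by
  classical
  unfold mulM
  rw [Finsupp.sum_single_index (by rw [Finsupp.sum_single_index] <;> simp)]
  rw [Finsupp.sum_single_index (by simp)]

lemma mulM_add_left (f₁ f₂ g : (List UTree) →₀ k) :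
    mulM k (f₁ + f₂) g = mulM k f₁ g + mulM k f₂ g := by
  classical
  unfold mulM
  refine Finsupp.sum_add_index' (fun X => by simp) (fun X a₁ a₂ => ?_)
  rw [← Finsupp.sum_add]
  refine Finsupp.sum_congr fun Y _ => ?_
  rw [add_mul, Finsupp.single_add, ite_zero_add]

lemma mulM_sum_left {ι : Type} (s : Finset ι) (F : ι → (List UTree) →₀ k)
    (g : (List UTree) →₀ k) :
    mulM k (∑ i ∈ s, F i) g = ∑ i ∈ s, mulM k (F i) g := by
  classical
  induction s using Finset.induction_on with
  | empty => simp [mulM_zero_left]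
  | insert _ _ hnm ih =>
    rw [Finset.sum_insert hnm, Finset.sum_insert hnm, mulM_add_left, ih]

lemma mulM_zero_right (f : (List UTree) →₀ k) : mulM k f 0 = 0 := by
  unfold mulM
  simp [Finsupp.sum_zero_index, Finsupp.sum, Finset.sum_const_zero]

lemma mulM_add_right (f v w : (List UTree) →₀ k) :
    mulM k f (v + w) = mulM k f v + mulM k f w := by
  classical
  unfold mulM
  rw [← Finsupp.sum_add]
  refine Finsupp.sum_congr fun X _ => ?_
  refine Finsupp.sum_add_index' (fun Y => by simp) (fun Y b₁ b₂ => ?_)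
  rw [mul_add, Finsupp.single_add, ite_zero_add]

lemma mulM_sum_right {ι : Type} (s : Finset ι) (f : (List UTree) →₀ k)
    (G : ι → (List UTree) →₀ k) :
    mulM k f (∑ i ∈ s, G i) = ∑ i ∈ s, mulM k f (G i) := by
  classical
  induction s using Finset.induction_on with
  | empty => simp [mulM_zero_right]
  | insert _ _ hnm ih =>
    rw [Finset.sum_insert hnm, Finset.sum_insert hnm, mulM_add_right, ih]

lemma mulL_zero_right (f : (List LTree) →₀ k) : mulL k f 0 = 0 := by
  unfold mulL
  simp [Finsupp.sum_zero_index, Finsupp.sum, Finset.sum_const_zero]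

lemma mulL_add_right (f v w : (List LTree) →₀ k) :
    mulL k f (v + w) = mulL k f v + mulL k f w := by
  classical
  unfold mulL
  rw [← Finsupp.sum_add]
  refine Finsupp.sum_congr fun X _ => ?_
  refine Finsupp.sum_add_index' (fun Y => by simp) (fun Y b₁ b₂ => ?_)
  rw [mul_add, Finsupp.single_add, ite_zero_add]

lemma mulL_zero_left (g : (List LTree) →₀ k) : mulL k 0 g = 0 := by
  unfold mulL
  exact Finsupp.sum_zero_index

lemma mulL_single_single (X Y : List LTree) (a b : k) :
    mulL k (Finsupp.single X a) (Finsupp.single Y b)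
      = if forestFoliage X = squash Y then Finsupp.single (bullet X Y) (a * b) else 0 := by
  classical
  unfold mulL
  rw [Finsupp.sum_single_index (by rw [Finsupp.sum_single_index] <;> simp)]
  rw [Finsupp.sum_single_index (by simp)]

lemma mulL_add_left (f₁ f₂ g : (List LTree) →₀ k) :
    mulL k (f₁ + f₂) g = mulL k f₁ g + mulL k f₂ g := by
  classical
  unfold mulL
  refine Finsupp.sum_add_index' (fun X => by simp) (fun X a₁ a₂ => ?_)
  rw [← Finsupp.sum_add]
  refine Finsupp.sum_congr fun Y _ => ?_
  rw [add_mul, Finsupp.single_add, ite_zero_add]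

lemma mulL_sum_left {ι : Type} (s : Finset ι) (F : ι → (List LTree) →₀ k)
    (g : (List LTree) →₀ k) :
    mulL k (∑ i ∈ s, F i) g = ∑ i ∈ s, mulL k (F i) g := by
  classical
  induction s using Finset.induction_on with
  | empty => simp [mulL_zero_left]
  | insert _ _ hnm ih =>
    rw [Finset.sum_insert hnm, Finset.sum_insert hnm, mulL_add_left, ih]

lemma mulM_polU_polU (L M : List UTree) :
    mulM k (polU k L) (polU k M)
      = ∑ X ∈ L.permutations.toFinset, ∑ Y ∈ M.permutations.toFinset,
          if foliageU X = squashU Y then Finsupp.single (bulletU X Y) (1 : k) else 0 := by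
  classical
  unfold polU
  rw [mulM_sum_left]
  refine Finset.sum_congr rfl fun X _ => ?_
  rw [mulM_sum_right]
  refine Finset.sum_congr rfl fun Y _ => ?_
  rw [mulM_single_single, one_mul]

def Xof (a b : ℕ) (W : List UTree) (i : ℕ) : List UTree :=
  (W.take i).map (fun t => UTree.leaf t.value) ++
    N0 a b :: (W.drop (i+1)).map (fun t => UTree.leaf t.value)

def childL : UTree → UTree
  | .node u _ => u
  | t => t

def childR : UTree → UTree
  | .node _ v => v
  | t => t

def Ylof (W : List UTree) (i : ℕ) : List UTree :=
  W.take i ++ childL (W.getD i default) :: childR (W.getD i default) :: W.drop (i+1)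

lemma indexOf_eq_length {t₀ : UTree} (s t : List UTree) (h : t₀ ∉ s) :
    (s ++ t₀ :: t).idxOf t₀ = s.length := by
  induction s with
  | nil => simp
  | cons x s ih =>
    have hx : t₀ ≠ x := fun hc => h (by simp [hc])
    simp only [List.cons_append, List.length_cons]
    rw [List.idxOf_cons_ne _ (fun hc => hx hc.symm), ih (fun hc => h (by simp [hc]))]

lemma all_leaves_eq (l : List UTree) (hl : ∀ x ∈ l, ∃ c, x = UTree.leaf c) :
    l = (l.map UTree.value).map UTree.leaf := by
  induction l with
  | nil => rfl
  | cons x l ih =>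
    obtain ⟨c, rfl⟩ := hl x (by simp)
    simp only [List.map_cons, UTree.value, List.cons.injEq]
    exact ⟨trivial, ih fun y hy => hl y (by simp [hy])⟩

lemma exists_decomp {X : List UTree} {a b : ℕ} {ds : List ℕ}
    (h : X.Perm (N0 a b :: ds.map UTree.leaf)) :
    ∃ l₁ l₂ : List ℕ, X = l₁.map UTree.leaf ++ N0 a b :: l₂.map UTree.leaf := by
  classical
  have hmem : N0 a b ∈ X := h.mem_iff.2 List.mem_cons_self
  obtain ⟨s, t, rfl⟩ := List.append_of_mem hmem
  have hN0leaf : (N0 a b) ∉ ds.map UTree.leaf := by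
    intro hc
    obtain ⟨c, _, hc2⟩ := List.mem_map.1 hc
    simp [N0] at hc2
  have hcount : (s ++ N0 a b :: t).count (N0 a b) = 1 := by
    rw [h.count_eq]
    simp [List.count_cons, List.count_eq_zero.2 hN0leaf]
  rw [List.count_append, List.count_cons_self] at hcount
  have hs : N0 a b ∉ s := by
    intro hc
    have := List.count_pos_iff.2 hc
    omega
  have ht : N0 a b ∉ t := by
    intro hc
    have := List.count_pos_iff.2 hc
    omega
  have hleaf : ∀ x ∈ s ++ t, ∃ c, x = UTree.leaf c := by
    intro x hx
    have hxX : x ∈ s ++ N0 a b :: t := by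
      rcases List.mem_append.1 hx with h1 | h1
      · exact List.mem_append.2 (Or.inl h1)
      · exact List.mem_append.2 (Or.inr (List.mem_cons.2 (Or.inr h1)))
    rcases List.mem_cons.1 (h.subset hxX) with rfl | hm
    · exfalso
      rcases List.mem_append.1 hx with h1 | h1
      · exact hs h1
      · exact ht h1
    · obtain ⟨c, _, rfl⟩ := List.mem_map.1 hm
      exact ⟨c, rfl⟩
  refine ⟨s.map UTree.value, t.map UTree.value, ?_⟩
  rw [← all_leaves_eq s (fun x hx => hleaf x (List.mem_append.2 (Or.inl hx))),
    ← all_leaves_eq t (fun x hx => hleaf x (List.mem_append.2 (Or.inr hx)))]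

lemma pair_bij (a b : ℕ) (ds : List ℕ) (El Y₀ : List UTree)
    (hEl : El.Perm (N0 a b :: ds.map UTree.leaf))
    (hvY : (Y₀.map UTree.value).Perm (a :: b :: ds)) (W : List UTree) :
    ((El.permutations.toFinset ×ˢ Y₀.permutations.toFinset).filter
        (fun p => foliageU p.1 = squashU p.2 ∧ bulletU p.1 p.2 = W)).card
      = (goodIdx a b (↑Y₀) W).card := by
  classical
  have hN0notleaf : ∀ (l : List ℕ), N0 a b ∉ l.map UTree.leaf := by
    intro l hc
    obtain ⟨c, _, hc2⟩ := List.mem_map.1 hc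
    simp [N0] at hc2
  have hmapf : ∀ l : List UTree,
      l.map (fun t => UTree.leaf t.value) = (l.map UTree.value).map UTree.leaf := by
    intro l; simp [List.map_map]
  have hfolf : ∀ l : List UTree,
      foliageU (l.map (fun t => UTree.leaf t.value)) = l.map UTree.value := by
    intro l; rw [hmapf, foliageU_map_leaf]
  have hfolN0 : ∀ l₂ : List ℕ, foliageU (N0 a b :: l₂.map UTree.leaf) = a :: b :: l₂ := by
    intro l₂
    show (N0 a b).foliage ++ foliageU (l₂.map UTree.leaf) = _
    rw [foliageU_map_leaf]
    rfl
  have mem_goodIdx : ∀ i, i ∈ goodIdx a b (↑Y₀) W ↔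
      i < W.length ∧ ∃ t, W[i]? = Option.some t ∧ GoodT a b (↑Y₀) (↑W) t := by
    intro i
    unfold goodIdx posFilter
    simp [Finset.mem_filter, Finset.mem_range]
  have mem_pairs : ∀ p : List UTree × List UTree,
      (p ∈ (El.permutations.toFinset ×ˢ Y₀.permutations.toFinset).filter
        (fun p => foliageU p.1 = squashU p.2 ∧ bulletU p.1 p.2 = W)) ↔
      (p.1.Perm El ∧ p.2.Perm Y₀ ∧ foliageU p.1 = squashU p.2 ∧ bulletU p.1 p.2 = W) := by
    intro p
    rw [Finset.mem_filter, Finset.mem_product, List.mem_toFinset, List.mem_toFinset,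
      List.mem_permutations, List.mem_permutations]
    tauto
  have struct : ∀ p : List UTree × List UTree, p.1.Perm El → p.2.Perm Y₀ →
      foliageU p.1 = squashU p.2 → bulletU p.1 p.2 = W →
      ∃ (l₁ l₂ : List ℕ) (Ya Yb : List UTree) (u v : UTree),
        p.1 = l₁.map UTree.leaf ++ N0 a b :: l₂.map UTree.leaf ∧
        p.2 = Ya ++ u :: v :: Yb ∧ Ya.map UTree.value = l₁ ∧ Yb.map UTree.value = l₂ ∧
        u.value = a ∧ v.value = b ∧ W = Ya ++ UTree.node u v :: Yb := by
    intro p hp1 hp2 hcond hbul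
    obtain ⟨l₁, l₂, hX⟩ := exists_decomp (hp1.trans hEl)
    have hfol : foliageU p.1 = l₁ ++ a :: b :: l₂ := by
      rw [hX, foliageU_append, foliageU_map_leaf, hfolN0]
    have hsq : p.2.map UTree.value = l₁ ++ a :: b :: l₂ := by
      have h' : squashU p.2 = l₁ ++ a :: b :: l₂ := by rw [← hcond, hfol]
      exact h'
    rw [List.map_eq_append_iff] at hsq
    obtain ⟨Ya, rest, hsplit, hYa, hrest⟩ := hsq
    rw [List.map_eq_cons_iff] at hrest
    obtain ⟨u, rest2, hrest_eq, hu, hrest2⟩ := hrest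
    rw [List.map_eq_cons_iff] at hrest2
    obtain ⟨v, Yb, hrest2_eq, hvv, hYb⟩ := hrest2
    refine ⟨l₁, l₂, Ya, Yb, u, v, hX, ?_, hYa, hYb, hu, hvv, ?_⟩
    · rw [hsplit, hrest_eq, hrest2_eq]
    · rw [← hbul, hX, hsplit, hrest_eq, hrest2_eq]
      exact bullet_edge a b l₁ l₂ Ya Yb u v
        (by rw [← hYa, List.length_map]) (by rw [← hYb, List.length_map])
  refine Finset.card_bij' (fun p _ => p.1.idxOf (N0 a b))
    (fun i _ => (Xof a b W i, Ylof W i)) ?_ ?_ ?_ ?_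
  · -- forward membership
    intro p hp
    obtain ⟨hp1, hp2, hcond, hbul⟩ := (mem_pairs p).1 hp
    obtain ⟨l₁, l₂, Ya, Yb, u, v, hX, hY, hYa, hYb, hu, hvv, hW⟩ :=
      struct p hp1 hp2 hcond hbul
    have hidx : p.1.idxOf (N0 a b) = Ya.length := by
      rw [hX, indexOf_eq_length _ _ (hN0notleaf l₁), ← hYa, List.length_map,
        List.length_map]
    rw [mem_goodIdx, hidx]
    have hlen : Ya.length < W.length := by
      rw [hW, List.length_append, List.length_cons]
      omega
    refine ⟨hlen, UTree.node u v, ?_, u, v, rfl, hu, hvv, ?_⟩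
    · rw [hW, List.getElem?_append_right (le_refl Ya.length)]
      simp
    · have hWcoe : (↑W : Multiset UTree) = UTree.node u v ::ₘ ↑(Ya ++ Yb) := by
        rw [hW, Multiset.cons_coe, Multiset.coe_eq_coe]
        exact List.perm_middle
      rw [hWcoe, Multiset.erase_cons_head]
      have hperm : p.2.Perm (u :: v :: (Ya ++ Yb)) := by
        rw [hY]
        exact List.perm_middle.trans ((List.perm_middle).cons u)
      have hco : (↑(u :: v :: (Ya ++ Yb)) : Multiset UTree) = ↑Y₀ :=
        Multiset.coe_eq_coe.2 (hperm.symm.trans hp2)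
      rw [← hco]
      simp
  · -- backward membership
    intro i hi
    obtain ⟨hilen, t, hWi, u, v, rfl, hu, hvv, hM⟩ := (mem_goodIdx i).1 hi
    obtain ⟨hilen', hWget⟩ := List.getElem?_eq_some_iff.1 hWi
    have hgetD : W.getD i default = UTree.node u v := by
      rw [List.getD_eq_getElem?_getD, hWi]
      rfl
    have hWeq : W = W.take i ++ UTree.node u v :: W.drop (i+1) := by
      conv_lhs => rw [← List.take_append_drop i W]
      rw [List.drop_eq_getElem_cons hilen', hWget]
    have hYlof : Ylof W i = W.take i ++ u :: v :: W.drop (i+1) := by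
      unfold Ylof
      rw [hgetD]
      rfl
    have hXof : Xof a b W i
        = ((W.take i).map UTree.value).map UTree.leaf ++
            N0 a b :: ((W.drop (i+1)).map UTree.value).map UTree.leaf := by
      unfold Xof
      rw [hmapf, hmapf]
    have hErase : (↑W : Multiset UTree).erase (UTree.node u v)
        = ↑(W.take i ++ W.drop (i+1)) := by
      have hco : (↑W : Multiset UTree) = UTree.node u v ::ₘ ↑(W.take i ++ W.drop (i+1)) := by
        conv_lhs => rw [hWeq]
        rw [Multiset.cons_coe, Multiset.coe_eq_coe]
        exact List.perm_middle
      rw [hco, Multiset.erase_cons_head]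
    have hYl : (↑(Ylof W i) : Multiset UTree) = ↑Y₀ := by
      rw [hYlof, ← hM, hErase]
      rw [Multiset.cons_coe, Multiset.cons_coe, Multiset.coe_eq_coe]
      exact List.perm_middle.trans ((List.perm_middle).cons u)
    have hds : ((W.take i ++ W.drop (i+1)).map UTree.value : Multiset ℕ) = (↑ds : Multiset ℕ) := by
      have h1 : ((Ylof W i).map UTree.value : Multiset ℕ) = ↑(Y₀.map UTree.value) := by
        rw [← Multiset.map_coe, ← Multiset.map_coe, hYl]
      rw [hYlof] at h1
      have h2 : (↑(Y₀.map UTree.value) : Multiset ℕ) = ↑(a :: b :: ds) :=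
        Multiset.coe_eq_coe.2 hvY
      rw [h2] at h1
      have h3 : ((W.take i ++ u :: v :: W.drop (i+1)).map UTree.value : Multiset ℕ)
          = a ::ₘ b ::ₘ ↑((W.take i ++ W.drop (i+1)).map UTree.value) := by
        rw [Multiset.coe_eq_coe.2 (List.Perm.map UTree.value
          (List.perm_middle.trans ((List.perm_middle).cons u)))]
        simp [hu, hvv, Multiset.cons_coe]
      rw [h3] at h1
      have h4 : (↑(a :: b :: ds) : Multiset ℕ) = a ::ₘ b ::ₘ ↑ds := by
        rw [Multiset.cons_coe, Multiset.cons_coe]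
      rw [h4] at h1
      exact (Multiset.cons_inj_right _).1 ((Multiset.cons_inj_right _).1 h1)
    rw [mem_pairs]
    have hperm1 : (((W.take i).map UTree.value) ++ ((W.drop (i+1)).map UTree.value)).Perm ds := by
      have h5 := Multiset.coe_eq_coe.1 hds
      rwa [List.map_append] at h5
    refine ⟨?_, Multiset.coe_eq_coe.1 hYl, ?_, ?_⟩
    · -- Xof ~ El
      rw [hXof]
      refine List.Perm.trans List.perm_middle ?_
      refine List.Perm.trans ?_ hEl.symm
      refine List.Perm.cons _ ?_
      rw [← List.map_append]
      exact hperm1.map UTree.leaf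
    · -- foliage = squash
      rw [hXof, hYlof]
      rw [foliageU_append, foliageU_map_leaf, hfolN0]
      show _ = (W.take i ++ u :: v :: W.drop (i+1)).map UTree.value
      rw [List.map_append]
      simp [hu, hvv]
    · -- bullet
      rw [hXof, hYlof]
      rw [bullet_edge a b _ _ _ _ u v (by rw [List.length_map]) (by rw [List.length_map])]
      exact hWeq.symm
  · -- left inverse
    intro p hp
    obtain ⟨hp1, hp2, hcond, hbul⟩ := (mem_pairs p).1 hp
    obtain ⟨l₁, l₂, Ya, Yb, u, v, hX, hY, hYa, hYb, hu, hvv, hW⟩ :=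
      struct p hp1 hp2 hcond hbul
    have hidx : p.1.idxOf (N0 a b) = Ya.length := by
      rw [hX, indexOf_eq_length _ _ (hN0notleaf l₁), ← hYa, List.length_map,
        List.length_map]
    rw [hidx]
    have htake : W.take Ya.length = Ya := by rw [hW, List.take_left]
    have hdrop : W.drop (Ya.length + 1) = Yb := by
      have h6 : Ya ++ UTree.node u v :: Yb = (Ya ++ [UTree.node u v]) ++ Yb := by simp
      rw [hW, h6, List.drop_left' (by simp)]
    have hgetD : W.getD Ya.length default = UTree.node u v := by
      rw [hW, List.getD_eq_getElem?_getD, List.getElem?_append_right (le_refl Ya.length)]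
      simp
    apply Prod.ext
    · show Xof a b W Ya.length = p.1
      unfold Xof
      rw [htake, hdrop, hX, hmapf, hmapf, hYa, hYb]
    · show Ylof W Ya.length = p.2
      unfold Ylof
      rw [htake, hdrop, hgetD, hY]
      simp [childL, childR]
  · -- right inverse
    intro i hi
    dsimp only
    obtain ⟨hilen, t, hWi, u, v, rfl, hu, hvv, hM⟩ := (mem_goodIdx i).1 hi
    unfold Xof
    rw [indexOf_eq_length _ _ (by
      intro hc
      obtain ⟨s, _, hc2⟩ := List.mem_map.1 hc
      simp [N0] at hc2)]
    rw [List.length_map, List.length_take]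
    omega

lemma central (a b : ℕ) (ds : List ℕ) (El Y₀ : List UTree)
    (hEl : El.Perm (N0 a b :: ds.map UTree.leaf))
    (hvY : (Y₀.map UTree.value).Perm (a :: b :: ds)) (W : List UTree) :
    mulM k (polU k El) (polU k Y₀) W = ((goodIdx a b (↑Y₀) W).card : k) := by
  classical
  rw [mulM_polU_polU]
  rw [Finset.sum_apply']
  simp only [Finset.sum_apply']
  have hterm : ∀ X Y : List UTree,
      ((if foliageU X = squashU Y then Finsupp.single (bulletU X Y) (1:k) else 0) W)
        = if (foliageU X = squashU Y ∧ bulletU X Y = W) then 1 else 0 := by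
    intro X Y
    split_ifs with h1 h2 h2 <;> simp_all [Finsupp.single_apply]
  simp only [hterm]
  rw [← Finset.sum_product']
  have hbool : (∑ p ∈ El.permutations.toFinset ×ˢ Y₀.permutations.toFinset,
      if (foliageU p.1 = squashU p.2 ∧ bulletU p.1 p.2 = W) then (1:k) else 0)
      = (((El.permutations.toFinset ×ˢ Y₀.permutations.toFinset).filter
          (fun p => foliageU p.1 = squashU p.2 ∧ bulletU p.1 p.2 = W)).card : k) := by
    rw [Finset.sum_boole]
  rw [hbool, pair_bij a b ds El Y₀ hEl hvY W]

open Classical in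
lemma posFilter_card (p : UTree → Prop) (W : List UTree) :
    (posFilter p W).card = Multiset.countP p (↑W) := by
  classical
  induction W with
  | nil => simp [posFilter]
  | cons t W ih =>
    rw [← Multiset.cons_coe, Multiset.countP_cons, ← ih]
    unfold posFilter
    rw [Finset.card_filter, Finset.card_filter, List.length_cons, Finset.sum_range_succ']
    simp only [List.getElem?_cons_succ, List.getElem?_cons_zero, Option.some.injEq,
      exists_eq_left, exists_eq_left']

lemma goodIdx_card_perm (a b : ℕ) (Ym : Multiset ℕ) {W W' : List UTree}
    (hWW' : W.Perm W') (Ym' : Multiset UTree) :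
    (goodIdx a b Ym' W).card = (goodIdx a b Ym' W').card := by
  classical
  unfold goodIdx
  rw [posFilter_card, posFilter_card, Multiset.coe_eq_coe.2 hWW']

/-! ### The key measure inequality -/

lemma key {a b : ℕ} (ha : 0 < a) (hab : a < b) {A B U V : UTree} {R Y₁ : Multiset UTree}
    (hA : A.value = a) (hB : B.value = b) (hU : U.value = a) (hV : V.value = b)
    (hmin : ∀ t ∈ R, t.value < a + b → t.numNodes = 0)
    (heq : U ::ₘ V ::ₘ Y₁ = A ::ₘ B ::ₘ R) :
    (UTree.node U V ::ₘ Y₁ = UTree.node A B ::ₘ R) ∨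
      muM (UTree.node U V ::ₘ Y₁) < muM (UTree.node A B ::ₘ R) := by
  classical
  have hmu : U.numNodes^2 + (V.numNodes^2 + muM Y₁)
      = A.numNodes^2 + (B.numNodes^2 + muM R) := by
    simpa [muM_cons] using congrArg muM heq
  have hUcase : U = A ∨ (U.numNodes = 0 ∧ U = UTree.leaf a) := by
    by_cases hUA : U = A
    · exact Or.inl hUA
    · right
      have hUmem : U ∈ A ::ₘ B ::ₘ R := heq ▸ Multiset.mem_cons_self _ _
      rcases Multiset.mem_cons.1 hUmem with h | h
      · exact absurd h hUA
      rcases Multiset.mem_cons.1 h with h | h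
      · exfalso
        rw [h] at hU
        omega
      · have hn := hmin U h (by omega)
        have := leaf_of_numNodes_zero hn
        rw [hU] at this
        exact ⟨hn, this⟩
  have hVcase : V = B ∨ (V.numNodes = 0 ∧ V = UTree.leaf b) := by
    by_cases hVB : V = B
    · exact Or.inl hVB
    · right
      have hVmem : V ∈ A ::ₘ B ::ₘ R := heq ▸
        (Multiset.mem_cons.2 (Or.inr (Multiset.mem_cons_self _ _)))
      rcases Multiset.mem_cons.1 hVmem with h | h
      · exfalso
        rw [h] at hV
        omega
      rcases Multiset.mem_cons.1 h with h | h
      · exact absurd h hVB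
      · have hn := hmin V h (by omega)
        have := leaf_of_numNodes_zero hn
        rw [hV] at this
        exact ⟨hn, this⟩
  by_cases hUA : U = A
  · by_cases hVB : V = B
    · left
      subst hUA; subst hVB
      rw [(Multiset.cons_inj_right _).1 ((Multiset.cons_inj_right _).1 heq)]
    · right
      rcases hVcase with h | ⟨hn0, hVleaf⟩
      · exact absurd h hVB
      have hBpos : 1 ≤ B.numNodes := by
        rcases Nat.eq_zero_or_pos B.numNodes with h0 | h0
        · exfalso
          have hBleaf := leaf_of_numNodes_zero h0
          rw [hB] at hBleaf
          exact hVB (hVleaf.trans hBleaf.symm)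
        · exact h0
      subst hUA
      simp only [muM_cons, UTree.numNodes]
      rw [hn0] at hmu ⊢
      have hxy : 1 ≤ (U.numNodes + 1) * B.numNodes :=
        Nat.one_le_iff_ne_zero.2 (by positivity)
      nlinarith [hmu, hxy]
  · rcases hUcase with h | ⟨hn0U, hUleaf⟩
    · exact absurd h hUA
    by_cases hVB : V = B
    · right
      have hApos : 1 ≤ A.numNodes := by
        rcases Nat.eq_zero_or_pos A.numNodes with h0 | h0
        · exfalso
          have hAleaf := leaf_of_numNodes_zero h0
          rw [hA] at hAleaf
          exact hUA (hUleaf.trans hAleaf.symm)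
        · exact h0
      subst hVB
      simp only [muM_cons, UTree.numNodes]
      rw [hn0U] at hmu ⊢
      have hxy : 1 ≤ (V.numNodes + 1) * A.numNodes :=
        Nat.one_le_iff_ne_zero.2 (by positivity)
      nlinarith [hmu, hxy]
    · right
      rcases hVcase with h | ⟨hn0V, hVleaf⟩
      · exact absurd h hVB
      have hApos : 1 ≤ A.numNodes := by
        rcases Nat.eq_zero_or_pos A.numNodes with h0 | h0
        · exfalso
          have hAleaf := leaf_of_numNodes_zero h0
          rw [hA] at hAleaf
          exact hUA (hUleaf.trans hAleaf.symm)
        · exact h0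
      simp only [muM_cons, UTree.numNodes]
      rw [hn0U, hn0V] at hmu ⊢
      nlinarith [hmu, hApos, Nat.zero_le (A.numNodes * B.numNodes)]

/-! ### Erasing labels -/

lemma eraseT_shift (m : ℕ) (t : LTree) : eraseT (t.shift m) = eraseT t := by
  induction t with
  | leaf x => rfl
  | node i t1 t2 ih1 ih2 => simp [LTree.shift, eraseT, ih1, ih2]

lemma eraseT_graft (t : LTree) : ∀ ys : List LTree,
    eraseT (t.graft ys).1 = ((eraseT t).graft (ys.map eraseT)).1 ∧
      (t.graft ys).2.map eraseT = ((eraseT t).graft (ys.map eraseT)).2 := by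
  induction t with
  | leaf x => intro ys; cases ys <;> simp [LTree.graft, UTree.graft, eraseT]
  | node i t1 t2 ih1 ih2 =>
    intro ys
    obtain ⟨h1a, h1b⟩ := ih1 ys
    obtain ⟨h2a, h2b⟩ := ih2 (t1.graft ys).2
    rw [h1b] at h2a h2b
    constructor
    · simp only [LTree.graft, UTree.graft, eraseT, h1a, h2a]
    · simp only [LTree.graft, UTree.graft, eraseT, h2b]

lemma eraseF_graftForest (X : List LTree) : ∀ ys : List LTree,
    eraseF (graftForest X ys) = graftForestU (eraseF X) (ys.map eraseT) := by
  induction X with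
  | nil => intro ys; rfl
  | cons t X ih =>
    intro ys
    obtain ⟨h1, h2⟩ := eraseT_graft t ys
    simp only [graftForest, graftForestU, eraseF, List.map_cons] at *
    rw [← h1, ← h2]
    exact congrArg _ (ih _)

lemma eraseF_bullet (X Y : List LTree) :
    eraseF (bullet X Y) = bulletU (eraseF X) (eraseF Y) := by
  unfold bullet bulletU
  rw [eraseF_graftForest]
  congr 1
  show (Y.map (LTree.shift (forestLen X))).map eraseT = Y.map eraseT
  rw [List.map_map]
  exact List.map_congr_left fun t _ => eraseT_shift _ t

lemma foliage_erase (t : LTree) : (eraseT t).foliage = t.foliage := by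
  induction t with
  | leaf x => rfl
  | node i t1 t2 ih1 ih2 => simp [eraseT, UTree.foliage, LTree.foliage, ih1, ih2]

lemma value_erase (t : LTree) : (eraseT t).value = t.value := by
  induction t with
  | leaf x => rfl
  | node i t1 t2 ih1 ih2 => simp [eraseT, UTree.value, LTree.value, ih1, ih2]

lemma forestFoliage_erase (X : List LTree) : foliageU (eraseF X) = forestFoliage X := by
  induction X with
  | nil => rfl
  | cons t X ih => simp [foliageU, forestFoliage, eraseF, foliage_erase] at ih ⊢; exact ih

lemma squash_erase (X : List LTree) : squashU (eraseF X) = squash X := by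
  simp [squashU, squash, eraseF, List.map_map]
  exact fun t _ => value_erase t

lemma perm_map_exists {α β : Type} (f : α → β) {X' M : List β} (h : X'.Perm M) :
    ∀ L : List α, M = L.map f → ∃ X : List α, X.Perm L ∧ X' = X.map f := by
  induction h with
  | nil =>
    intro L hL
    rw [eq_comm, List.map_eq_nil_iff] at hL
    exact ⟨[], by simp [hL]⟩
  | cons x h ih =>
    intro L hL
    rw [eq_comm, List.map_eq_cons_iff] at hL
    obtain ⟨y, L', rfl, rfl, hmap⟩ := hL
    obtain ⟨X, hX, rfl⟩ := ih L' hmap.symm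
    exact ⟨y :: X, hX.cons _, rfl⟩
  | swap x y l =>
    intro L hL
    rw [eq_comm, List.map_eq_cons_iff] at hL
    obtain ⟨u, L₁, rfl, rfl, hmap⟩ := hL
    rw [List.map_eq_cons_iff] at hmap
    obtain ⟨v, L₂, rfl, rfl, hmap₂⟩ := hmap
    exact ⟨v :: u :: L₂, List.Perm.swap _ _ _, by simp [hmap₂]⟩
  | trans h₁ h₂ ih₁ ih₂ =>
    intro L hL
    obtain ⟨X₀, hX₀, rfl⟩ := ih₂ L hL
    obtain ⟨X, hX, rfl⟩ := ih₁ X₀ rfl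
    exact ⟨X, hX.trans hX₀, rfl⟩

lemma EL_single (X : List LTree) (a : k) :
    EL k (Finsupp.single X a) = Finsupp.single (eraseF X) a := by
  simp [EL, Finsupp.lmapDomain_apply, Finsupp.mapDomain_single]

lemma sum_perm_erase {M : Type} [AddCommMonoid M] (L : List LTree)
    (hinj : ∀ s ∈ L, ∀ t ∈ L, eraseT s = eraseT t → s = t)
    (F : List UTree → M) :
    ∑ X ∈ L.permutations.toFinset, F (eraseF X)
      = ∑ X' ∈ (eraseF L).permutations.toFinset, F X' := by
  classical
  refine Finset.sum_bij (fun X _ => eraseF X) ?_ ?_ ?_ ?_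
  · intro X hX
    rw [List.mem_toFinset, List.mem_permutations] at hX ⊢
    exact hX.map eraseT
  · intro X₁ h₁ X₂ h₂ heq
    rw [List.mem_toFinset, List.mem_permutations] at h₁ h₂
    have heq' : X₁.map eraseT = X₂.map eraseT := heq
    apply List.ext_getElem
    · rw [h₁.length_eq, h₂.length_eq]
    · intro i hi₁ hi₂
      have hig := List.getElem_of_eq heq' (i := i) (by simpa using hi₁)
      simp only [List.getElem_map] at hig
      exact hinj _ (h₁.subset (List.getElem_mem hi₁)) _ (h₂.subset (List.getElem_mem hi₂)) hig
  · intro X' hX'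
    rw [List.mem_toFinset, List.mem_permutations] at hX'
    obtain ⟨X, hX, rfl⟩ := perm_map_exists eraseT hX' L rfl
    exact ⟨X, by rw [List.mem_toFinset, List.mem_permutations]; exact hX, rfl⟩
  · intro X hX
    rfl

lemma EL_pol (L : List LTree)
    (hinj : ∀ s ∈ L, ∀ t ∈ L, eraseT s = eraseT t → s = t) :
    EL k (pol k L) = polU k (eraseF L) := by
  unfold pol polU
  rw [map_sum]
  simp only [EL_single]
  exact sum_perm_erase L hinj (fun W => Finsupp.single W 1)

lemma mulL_pol_single (L : List LTree) (Y : List LTree) (b : k) :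
    mulL k (pol k L) (Finsupp.single Y b)
      = ∑ X ∈ L.permutations.toFinset,
          if forestFoliage X = squash Y then Finsupp.single (bullet X Y) b else 0 := by
  classical
  unfold pol
  rw [mulL_sum_left]
  refine Finset.sum_congr rfl fun X _ => ?_
  rw [mulL_single_single, one_mul]

lemma mulM_polU_single (L : List UTree) (Y : List UTree) (b : k) :
    mulM k (polU k L) (Finsupp.single Y b)
      = ∑ X ∈ L.permutations.toFinset,
          if foliageU X = squashU Y then Finsupp.single (bulletU X Y) b else 0 := by
  classical
  unfold polU
  rw [mulM_sum_left]
  refine Finset.sum_congr rfl fun X _ => ?_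
  rw [mulM_single_single, one_mul]

lemma mulL_pol_zero (L : List LTree) : mulL k (pol k L) 0 = 0 := mulL_zero_right k _

lemma mulL_pol_add (L : List LTree) (v w : (List LTree) →₀ k) :
    mulL k (pol k L) (v + w) = mulL k (pol k L) v + mulL k (pol k L) w :=
  mulL_add_right k _ v w

lemma mulM_polU_zero (L : List UTree) : mulM k (polU k L) 0 = 0 := mulM_zero_right k _

lemma mulM_polU_add (L : List UTree) (v w : (List UTree) →₀ k) :
    mulM k (polU k L) (v + w) = mulM k (polU k L) v + mulM k (polU k L) w :=
  mulM_add_right k _ v w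

lemma mulM_smul_right (f : (List UTree) →₀ k) (c : k) (v : (List UTree) →₀ k) :
    mulM k f (c • v) = c • mulM k f v := by
  classical
  unfold mulM
  rw [Finsupp.smul_sum]
  refine Finsupp.sum_congr fun X _ => ?_
  rw [Finsupp.sum_smul_index (fun Y => by simp), Finsupp.smul_sum]
  refine Finsupp.sum_congr fun Y _ => ?_
  by_cases hc : foliageU X = squashU Y
  · simp only [hc, if_true, Finsupp.smul_single, smul_eq_mul]
    congr 1
    ring
  · simp [hc]

lemma mulM_polU_smul (L : List UTree) (c : k) (v : (List UTree) →₀ k) :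
    mulM k (polU k L) (c • v) = c • mulM k (polU k L) v :=
  mulM_smul_right k _ c v

lemma EL_mulL_pol (L : List LTree)
    (hinj : ∀ s ∈ L, ∀ t ∈ L, eraseT s = eraseT t → s = t) (v : (List LTree) →₀ k) :
    EL k (mulL k (pol k L) v) = mulM k (polU k (eraseF L)) (EL k v) := by
  classical
  induction v using Finsupp.induction_linear with
  | zero => simp only [mulL_pol_zero, map_zero, mulM_polU_zero]
  | add v w ihv ihw =>
    rw [mulL_pol_add, map_add, map_add, mulM_polU_add, ihv, ihw]
  | single Y b =>
    rw [mulL_pol_single, map_sum, EL_single, mulM_polU_single]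
    have hterm : ∀ X : List LTree,
        EL k (if forestFoliage X = squash Y then Finsupp.single (bullet X Y) b else 0)
          = (fun W => if foliageU W = squashU (eraseF Y)
              then Finsupp.single (bulletU W (eraseF Y)) b else 0) (eraseF X) := by
      intro X
      rw [apply_ite (EL k), map_zero, EL_single]
      simp only [forestFoliage_erase, squash_erase, eraseF_bullet]
    rw [Finset.sum_congr rfl fun X _ => hterm X]
    exact sum_perm_erase L hinj (fun W => if foliageU W = squashU (eraseF Y)
      then Finsupp.single (bulletU W (eraseF Y)) b else 0)

lemma iotaLinM_single (P : QPath) (c : k) :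
    iotaLinM k (Finsupp.single P c) = c • iotaP k P := by
  unfold iotaLinM
  rw [Finsupp.lift_apply, Finsupp.sum_single_index (by simp)]

lemma iotaLinM_apply (x : QPath →₀ k) :
    iotaLinM k x = ∑ P ∈ x.support, x P • iotaP k P := by
  unfold iotaLinM
  rw [Finsupp.lift_apply]
  rfl

lemma edgeForest_inj (a b : ℕ) (q : Multiset ℕ) :
    ∀ s ∈ edgeForest a b q, ∀ t ∈ edgeForest a b q, eraseT s = eraseT t → s = t := by
  intro s hs t ht heq
  have hshape : ∀ u ∈ edgeForest a b q,
      u = LTree.node 1 (LTree.leaf a) (LTree.leaf b) ∨ ∃ c, u = LTree.leaf c := by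
    intro u hu
    rcases List.mem_cons.1 hu with h | h
    · exact Or.inl h
    · right
      obtain ⟨c, _, rfl⟩ := List.mem_map.1 h
      exact ⟨c, rfl⟩
  rcases hshape s hs with rfl | ⟨c, rfl⟩ <;> rcases hshape t ht with rfl | ⟨d, rfl⟩
  · rfl
  · simp [eraseT] at heq
  · simp [eraseT] at heq
  · simp [eraseT] at heq
    rw [heq]

lemma eraseF_edgeForest (a b : ℕ) (q : Multiset ℕ) :
    eraseF (edgeForest a b q) = N0 a b :: ((q.erase (a+b)).toList).map UTree.leaf := by
  simp only [edgeForest, eraseF, leavesOf, List.map_cons, List.map_map]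
  rfl

lemma EL_iota_ext (x : QPath →₀ k) (q : Multiset ℕ) (a b : ℕ)
    (hq : ∀ P ∈ x.support, P.dest = applyStep a b q) :
    EL k (iotaLinM k (x.mapDomain fun P => ⟨q, (a,b) :: P.steps⟩))
      = mulM k (polU k (eraseF (edgeForest a b q))) (EL k (iotaLinM k x)) := by
  classical
  have hstep : ∀ P ∈ x.support,
      iotaP k (⟨q, (a,b) :: P.steps⟩ : QPath)
        = mulL k (pol k (edgeForest a b q)) (iotaP k P) := by
    intro P hP
    have : iotaP k (⟨q, (a,b) :: P.steps⟩ : QPath)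
        = mulL k (pol k (edgeForest a b q))
            (iotaSteps k (applyStep a b q) P.steps) := rfl
    rw [this, ← hq P hP]
    rfl
  rw [Finsupp.mapDomain, Finsupp.sum, map_sum, map_sum]
  have hterm : ∀ P ∈ x.support,
      EL k (iotaLinM k (Finsupp.single (⟨q, (a,b) :: P.steps⟩ : QPath) (x P)))
        = x P • mulM k (polU k (eraseF (edgeForest a b q))) (EL k (iotaP k P)) := by
    intro P hP
    rw [iotaLinM_single, map_smul, hstep P hP,
      EL_mulL_pol k _ (edgeForest_inj a b q)]
  rw [Finset.sum_congr rfl hterm]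
  rw [iotaLinM_apply, map_sum, mulM_sum_right]
  refine Finset.sum_congr rfl fun P hP => ?_
  rw [map_smul, mulM_smul_right]

lemma exists_min_list {α : Type} (f : α → ℕ) (l : List α) (h : l ≠ []) :
    ∃ x ∈ l, ∀ y ∈ l, f x ≤ f y := by
  induction l with
  | nil => exact absurd rfl h
  | cons x l ih =>
    by_cases hl : l = []
    · subst hl
      exact ⟨x, by simp, by simp⟩
    · obtain ⟨y, hy, hmin⟩ := ih hl
      by_cases hxy : f x ≤ f y
      · exact ⟨x, by simp, by
          intro z hz
          rcases List.mem_cons.1 hz with rfl | hz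
          · exact le_refl _
          · exact le_trans hxy (hmin z hz)⟩
      · exact ⟨y, by simp [hy], by
          intro z hz
          rcases List.mem_cons.1 hz with rfl | hz
          · omega
          · exact hmin z hz⟩

lemma foliage_pos_of_mem {Z : List UTree} (hX : IsUForest Z) {t : UTree} (ht : t ∈ Z) :
    ∀ x ∈ t.foliage, 0 < x := fun x hx => hX x (List.mem_flatMap.2 ⟨t, ht, hx⟩)

lemma aux_main (k : Type) [Field k] [CharZero k] :
    ∀ (N : ℕ) (Z : List UTree), muM ↑Z ≤ N → IsUForest Z → ForestAlignedU Z →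
    ∃ x : QPath →₀ k, (∀ P ∈ x.support, P.Valid ∧ P.dest = (↑(squashU Z) : Multiset ℕ)) ∧
      EL k (iotaLinM k x) = polU k Z := by
  intro N
  induction N using Nat.strong_induction_on with
  | _ N ih =>
  intro Z hmuN hX hA
  classical
  by_cases h0 : forestLenU Z = 0
  · -- base case: all parts are leaves
    have hleaves : ∀ t ∈ Z, t.numNodes = 0 := by
      intro t ht
      by_contra hc
      have h1 : 0 < t.numNodes := Nat.pos_of_ne_zero hc
      have h2 : t.numNodes ≤ (Z.map UTree.numNodes).sum :=
        List.single_le_sum (by simp) _ (List.mem_map.2 ⟨t, ht, rfl⟩)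
      unfold forestLenU at h0
      omega
    set qZ : Multiset ℕ := (↑(squashU Z) : Multiset ℕ) with hqZdef
    set P₀ : QPath := ⟨qZ, []⟩ with hP₀def
    have hqpos : ∀ y ∈ qZ, 0 < y := by
      intro y hy
      rw [hqZdef] at hy
      have hy' : y ∈ squashU Z := hy
      obtain ⟨t, ht, rfl⟩ := List.mem_map.1 hy'
      exact value_pos (foliage_pos_of_mem hX ht)
    refine ⟨Finsupp.single P₀ 1, ?_, ?_⟩
    · intro P hP
      have hPeq : P = P₀ := by
        have := Finsupp.support_single_subset hP
        simpa using this
      subst hPeq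
      refine ⟨⟨hqpos, by simp [hP₀def], trivial⟩, rfl⟩
    · rw [iotaLinM_single, one_smul]
      have hiota : iotaP k P₀ = pol k (leavesOf qZ.toList) := rfl
      rw [hiota]
      have hinj : ∀ s ∈ leavesOf qZ.toList, ∀ t ∈ leavesOf qZ.toList,
          eraseT s = eraseT t → s = t := by
        intro s hs t ht heq
        obtain ⟨c, _, rfl⟩ := List.mem_map.1 hs
        obtain ⟨d, _, rfl⟩ := List.mem_map.1 ht
        simp [eraseT] at heq
        rw [heq]
      rw [EL_pol k _ hinj]
      have herase : eraseF (leavesOf qZ.toList) = qZ.toList.map UTree.leaf := by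
        simp only [eraseF, leavesOf, List.map_map]
        rfl
      rw [herase]
      apply polU_perm
      have hZeq : Z = (Z.map UTree.value).map UTree.leaf := by
        apply all_leaves_eq
        intro t ht
        exact ⟨t.value, leaf_of_numNodes_zero (hleaves t ht)⟩
      have hperm : (qZ.toList).Perm (Z.map UTree.value) := by
        rw [← Multiset.coe_eq_coe, Multiset.coe_toList, hqZdef]
        rfl
      conv_rhs => rw [hZeq]
      exact hperm.map UTree.leaf
  · -- inductive case: peel a minimal-value node tree
    have hexT : ∃ T ∈ Z, T.numNodes ≠ 0 := by
      by_contra hc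
      push_neg at hc
      apply h0
      unfold forestLenU
      apply List.sum_eq_zero
      intro x hx
      obtain ⟨t, ht, rfl⟩ := List.mem_map.1 hx
      exact hc t ht
    set S := Z.filter (fun t => t.numNodes ≠ 0) with hSdef
    have hSne : S ≠ [] := by
      obtain ⟨T, hT, hTn⟩ := hexT
      intro hc
      have : T ∈ S := List.mem_filter.2 ⟨hT, by simpa using hTn⟩
      rw [hc] at this
      simp at this
    obtain ⟨T, hTS, hTmin⟩ := exists_min_list UTree.value S hSne
    have hTZ : T ∈ Z := (List.mem_filter.1 hTS).1
    have hTn : T.numNodes ≠ 0 := by simpa using (List.mem_filter.1 hTS).2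
    have hminS : ∀ t ∈ Z, t.numNodes ≠ 0 → T.value ≤ t.value := by
      intro t ht htn
      exact hTmin t (List.mem_filter.2 ⟨ht, by simpa using htn⟩)
    cases T with
    | leaf c => simp [UTree.numNodes] at hTn
    | node A B =>
    obtain ⟨hab', hAal, hBal⟩ := hA _ hTZ
    set a := A.value with ha_def
    set b := B.value with hb_def
    have hApos : ∀ x ∈ A.foliage, 0 < x := by
      intro x hx
      exact foliage_pos_of_mem hX hTZ x (by simp [UTree.foliage, hx])
    have hBpos : ∀ x ∈ B.foliage, 0 < x := by
      intro x hx
      exact foliage_pos_of_mem hX hTZ x (by simp [UTree.foliage, hx])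
    have ha : 0 < a := value_pos hApos
    have hab : a < b := hab'
    set ZT := Z.erase (UTree.node A B) with hZTdef
    set Y₀ : List UTree := A :: B :: ZT with hY₀def
    set ds : List ℕ := ZT.map UTree.value with hdsdef
    set qZ : Multiset ℕ := (↑(squashU Z) : Multiset ℕ) with hqZdef
    have hpermZT : Z.Perm (UTree.node A B :: ZT) := List.perm_cons_erase hTZ
    have hZco : (↑Z : Multiset UTree) = UTree.node A B ::ₘ ↑ZT := by
      rw [Multiset.coe_eq_coe.2 hpermZT, ← Multiset.cons_coe]
    have hqZ : qZ = (a + b) ::ₘ (↑ds : Multiset ℕ) := by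
      rw [hqZdef]
      show (↑(Z.map UTree.value) : Multiset ℕ) = _
      rw [← Multiset.map_coe, hZco, Multiset.map_cons, ← Multiset.map_coe]
      rfl
    have hqZerase : qZ.erase (a + b) = (↑ds : Multiset ℕ) := by
      rw [hqZ, Multiset.erase_cons_head]
    have happly : applyStep a b qZ = (↑(squashU Y₀) : Multiset ℕ) := by
      unfold applyStep
      rw [hqZerase]
      show _ = (↑(Y₀.map UTree.value) : Multiset ℕ)
      rw [hY₀def]
      simp only [List.map_cons]
      rw [← Multiset.cons_coe, ← Multiset.cons_coe]
    have hYmap : Y₀.map UTree.value = a :: b :: ds := rfl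
    have hvY : (Y₀.map UTree.value).Perm (a :: b :: ds) := by rw [hYmap]
    set El : List UTree := eraseF (edgeForest a b qZ) with hEldef
    have hEl : El.Perm (N0 a b :: ds.map UTree.leaf) := by
      rw [hEldef, eraseF_edgeForest]
      refine List.Perm.cons _ ?_
      refine List.Perm.map _ ?_
      rw [← Multiset.coe_eq_coe, Multiset.coe_toList, hqZerase]
    have hYfor : IsUForest Y₀ := by
      intro x hx
      obtain ⟨t, ht, hxt⟩ := List.mem_flatMap.1 hx
      rcases List.mem_cons.1 ht with rfl | ht
      · exact hApos x hxt
      rcases List.mem_cons.1 ht with rfl | ht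
      · exact hBpos x hxt
      · exact foliage_pos_of_mem hX (List.mem_of_mem_erase ht) x hxt
    have hYal : ForestAlignedU Y₀ := by
      intro t ht
      rcases List.mem_cons.1 ht with rfl | ht
      · exact hAal
      rcases List.mem_cons.1 ht with rfl | ht
      · exact hBal
      · exact hA _ (List.mem_of_mem_erase ht)
    have hYtree : ∀ t ∈ Y₀, ∀ x ∈ t.foliage, 0 < x :=
      fun t ht x hx => hYfor x (List.mem_flatMap.2 ⟨t, ht, hx⟩)
    have hmuZ : muM ↑Z = (A.numNodes + B.numNodes + 1)^2 + muM ↑ZT := by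
      rw [hZco, muM_cons]
      rfl
    have hmuY : muM ↑Y₀ = A.numNodes^2 + (B.numNodes^2 + muM ↑ZT) := by
      rw [hY₀def, muM_coe_cons, muM_coe_cons]
    have hmuYlt : muM ↑Y₀ < muM ↑Z := by
      rw [hmuZ, hmuY]
      nlinarith [Nat.zero_le (A.numNodes * B.numNodes)]
    have hmuZ1 : 1 ≤ muM ↑Z := by
      have h1 : 1 ≤ (A.numNodes + B.numNodes + 1)^2 := Nat.one_le_pow _ _ (by omega)
      omega
    have hN1 : 1 ≤ N := le_trans hmuZ1 hmuN
    obtain ⟨xY, hxYsupp, hxYEL⟩ := ih (N - 1) (by omega) Y₀ (by omega) hYfor hYal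
    set xP := xY.mapDomain (fun P => (⟨qZ, (a, b) :: P.steps⟩ : QPath)) with hxPdef
    have hq : ∀ P ∈ xY.support, P.dest = applyStep a b qZ := by
      intro P hP
      rw [(hxYsupp P hP).2, happly]
    have hELP : EL k (iotaLinM k xP) = mulM k (polU k El) (polU k Y₀) := by
      rw [hxPdef, EL_iota_ext k xY qZ a b hq, hxYEL]
    set f := mulM k (polU k El) (polU k Y₀) with hfdef
    have hfW : ∀ W, f W = ((goodIdx a b (↑Y₀) W).card : k) :=
      central k a b ds El Y₀ hEl hvY
    have hsym : ∀ W W', W.Perm W' → f W = f W' := by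
      intro W W' hWW'
      rw [hfW, hfW]
      exact_mod_cast goodIdx_card_perm a b 0 hWW' (↑Y₀)
    -- structure of the support
    have hstruct : ∀ W : List UTree, f W ≠ 0 →
        IsUForest W ∧ ForestAlignedU W ∧ (↑(squashU W) : Multiset ℕ) = qZ ∧
        ((↑W : Multiset UTree) = ↑Z ∨ muM ↑W < muM ↑Z) := by
      intro W hfWne
      rw [hfW] at hfWne
      have hcard : (goodIdx a b (↑Y₀) W).card ≠ 0 := by
        intro hc; rw [hc] at hfWne; simp at hfWne
      obtain ⟨i, hi⟩ := Finset.card_ne_zero.1 hcard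
      have hi' := hi
      unfold goodIdx posFilter at hi'
      rw [Finset.mem_filter, Finset.mem_range] at hi'
      obtain ⟨hilen, t, hWi, u, v, rfl, hu, hvv, hM⟩ := hi'
      obtain ⟨hilen2, hWget⟩ := List.getElem?_eq_some_iff.1 hWi
      have hmemW : UTree.node u v ∈ W := hWget ▸ List.getElem_mem hilen2
      have hWco : (↑W : Multiset UTree)
          = UTree.node u v ::ₘ (↑W : Multiset UTree).erase (UTree.node u v) :=
        (Multiset.cons_erase (Multiset.mem_coe.2 hmemW)).symm
      have hY₀co : (↑Y₀ : Multiset UTree) = A ::ₘ B ::ₘ ↑ZT := by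
        rw [hY₀def, ← Multiset.cons_coe, ← Multiset.cons_coe]
      have huY : u ∈ Y₀ := by
        have : u ∈ (↑Y₀ : Multiset UTree) := by
          rw [← hM]; exact Multiset.mem_cons_self _ _
        exact Multiset.mem_coe.1 this
      have hvY' : v ∈ Y₀ := by
        have : v ∈ (↑Y₀ : Multiset UTree) := by
          rw [← hM]; exact Multiset.mem_cons.2 (Or.inr (Multiset.mem_cons_self _ _))
        exact Multiset.mem_coe.1 this
      have hsubW : ∀ t' ∈ W, t' = UTree.node u v ∨ t' ∈ Y₀ := by
        intro t' ht'
        have : t' ∈ (↑W : Multiset UTree) := Multiset.mem_coe.2 ht'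
        rw [hWco] at this
        rcases Multiset.mem_cons.1 this with h | h
        · exact Or.inl h
        · right
          apply Multiset.mem_coe.1
          rw [← hM]
          exact Multiset.mem_cons.2 (Or.inr (Multiset.mem_cons.2 (Or.inr h)))
      have hmapM : Multiset.map UTree.value ((↑W : Multiset UTree).erase (UTree.node u v))
          = (↑ds : Multiset ℕ) := by
        have h1 := congrArg (Multiset.map UTree.value) hM
        rw [Multiset.map_cons, Multiset.map_cons, hu, hvv] at h1
        have h2 : Multiset.map UTree.value (↑Y₀ : Multiset UTree)
            = a ::ₘ b ::ₘ (↑ds : Multiset ℕ) := by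
          rw [Multiset.map_coe, hYmap, ← Multiset.cons_coe, ← Multiset.cons_coe]
        rw [h2] at h1
        exact (Multiset.cons_inj_right _).1 ((Multiset.cons_inj_right _).1 h1)
      refine ⟨?_, ?_, ?_, ?_⟩
      · -- IsUForest W
        intro x hx
        obtain ⟨t', ht', hxt⟩ := List.mem_flatMap.1 hx
        rcases hsubW t' ht' with rfl | ht''
        · rcases List.mem_append.1 hxt with h | h
          · exact hYtree u huY x h
          · exact hYtree v hvY' x h
        · exact hYtree t' ht'' x hxt
      · -- aligned
        intro t' ht'
        rcases hsubW t' ht' with rfl | ht''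
        · exact ⟨by rw [hu, hvv]; exact hab, hYal u huY, hYal v hvY'⟩
        · exact hYal t' ht''
      · -- squash
        show (↑(W.map UTree.value) : Multiset ℕ) = qZ
        rw [← Multiset.map_coe, hWco, Multiset.map_cons, hmapM]
        show (u.value + v.value) ::ₘ _ = qZ
        rw [hu, hvv, hqZ]
      · -- key dichotomy
        have hmin : ∀ t' ∈ (↑ZT : Multiset UTree), t'.value < a + b → t'.numNodes = 0 := by
          intro t' ht' hval
          by_contra hc
          have := hminS t' (List.mem_of_mem_erase (Multiset.mem_coe.1 ht')) hc
          have hvalT : (UTree.node A B).value = a + b := rfl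
          omega
        have hkey := key ha hab (A := A) (B := B) (U := u) (V := v)
          (R := (↑ZT : Multiset UTree))
          (Y₁ := (↑W : Multiset UTree).erase (UTree.node u v))
          rfl rfl hu hvv hmin (by rw [hM, hY₀co])
        rw [hWco, hZco]
        exact hkey
    -- decompose f into orbit sums
    obtain ⟨R, hRsupp, hRpair, hRsum⟩ := sym_decomp k f hsym
    -- Z has nonzero coefficient
    have hZgood : Z.idxOf (UTree.node A B) ∈ goodIdx a b (↑Y₀) Z := by
      unfold goodIdx posFilter
      rw [Finset.mem_filter, Finset.mem_range]
      have hidx : Z.idxOf (UTree.node A B) < Z.length := List.idxOf_lt_length_iff.2 hTZ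
      refine ⟨hidx, UTree.node A B, ?_, A, B, rfl, rfl, rfl, ?_⟩
      · rw [List.getElem?_eq_some_iff]
        exact ⟨hidx, List.getElem_idxOf hidx⟩
      · rw [Multiset.coe_erase, ← hZTdef, hY₀def, ← Multiset.cons_coe, ← Multiset.cons_coe]
    have hfZ : f Z ≠ 0 := by
      rw [hfW]
      have hpos : 0 < (goodIdx a b (↑Y₀) Z).card := Finset.card_pos.2 ⟨_, hZgood⟩
      exact Nat.cast_ne_zero.2 hpos.ne'
    have hex : ∃ W₁ ∈ R, Z.Perm W₁ := by
      by_contra hno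
      push_neg at hno
      apply hfZ
      have heval : f Z = ∑ W ∈ R, f W * (polU k W) Z := by
        conv_lhs => rw [hRsum]
        rw [Finset.sum_apply']
        refine Finset.sum_congr rfl fun W _ => ?_
        rw [Finsupp.smul_apply, smul_eq_mul]
      rw [heval]
      apply Finset.sum_eq_zero
      intro W hW
      rw [polU_apply, if_neg (hno W hW), mul_zero]
    obtain ⟨W₁, hW₁R, hZW₁⟩ := hex
    have hfW₁ : f W₁ = f Z := hsym W₁ Z hZW₁.symm
    have hpolW₁ : polU k W₁ = polU k Z := polU_perm k hZW₁.symm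
    have hqpos : ∀ y ∈ qZ, 0 < y := by
      intro y hy
      rw [hqZdef] at hy
      have hy' : y ∈ squashU Z := hy
      obtain ⟨t, ht, rfl⟩ := List.mem_map.1 hy'
      exact value_pos (foliage_pos_of_mem hX ht)
    have hWx : ∀ W : List UTree, ∃ xw : QPath →₀ k,
        W ∈ R.erase W₁ →
          ((∀ P ∈ xw.support, P.Valid ∧ P.dest = qZ) ∧ EL k (iotaLinM k xw) = polU k W) := by
      intro W
      by_cases hW : W ∈ R.erase W₁
      · have hWR : W ∈ R := Finset.mem_of_mem_erase hW
        have hWne : W ≠ W₁ := Finset.ne_of_mem_erase hW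
        have hWsupp := hRsupp W hWR
        rw [Finsupp.mem_support_iff] at hWsupp
        obtain ⟨hWfor, hWal, hWsq, hWdich⟩ := hstruct W hWsupp
        have hmuW : muM ↑W < muM ↑Z := by
          rcases hWdich with h | h
          · exact absurd ((Multiset.coe_eq_coe.1 h).trans hZW₁)
              (hRpair W hWR W₁ hW₁R hWne)
          · exact h
        obtain ⟨xw, hxw1, hxw2⟩ := ih (N - 1) (by omega) W (by omega) hWfor hWal
        exact ⟨xw, fun _ => ⟨fun P hP => ⟨(hxw1 P hP).1,
          by rw [(hxw1 P hP).2, hWsq]⟩, hxw2⟩⟩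
      · exact ⟨0, fun hc => absurd hc hW⟩
    choose xw hxw using hWx
    refine ⟨(f Z)⁻¹ • (xP - ∑ W ∈ R.erase W₁, f W • xw W), ?_, ?_⟩
    · -- support condition
      intro P hP
      have hP1 : P ∈ (xP - ∑ W ∈ R.erase W₁, f W • xw W).support :=
        Finsupp.support_smul hP
      rcases Finset.mem_union.1 (Finsupp.support_sub hP1) with hl | hr
      · rw [hxPdef] at hl
        obtain ⟨P₁, hP₁supp, rfl⟩ := Finset.mem_image.1 (Finsupp.mapDomain_support hl)
        obtain ⟨hP₁V, hP₁dest⟩ := hxYsupp P₁ hP₁supp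
        refine ⟨⟨hqpos, ?_, ?_, ?_⟩, rfl⟩
        · intro s hs
          rcases List.mem_cons.1 hs with rfl | hs
          · exact ⟨ha, hab⟩
          · exact hP₁V.2.1 s hs
        · show a + b ∈ qZ
          rw [hqZ]
          exact Multiset.mem_cons_self _ _
        · show SeqOK (applyStep a b qZ) P₁.steps
          rw [happly, ← hP₁dest]
          exact hP₁V.2.2
      · obtain ⟨W, hWmem, hPW⟩ := Finset.mem_biUnion.1 (Finsupp.support_finset_sum hr)
        exact (hxw W hWmem).1 P (Finsupp.support_smul hPW)
    · -- the value under E ∘ ι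
      rw [map_smul, map_smul, map_sub, map_sub]
      have hsum : EL k (iotaLinM k (∑ W ∈ R.erase W₁, f W • xw W))
          = ∑ W ∈ R.erase W₁, f W • polU k W := by
        rw [map_sum, map_sum]
        refine Finset.sum_congr rfl fun W hW => ?_
        rw [map_smul, map_smul, (hxw W hW).2]
      rw [hsum, hELP]
      have hsplit : f = (∑ W ∈ R.erase W₁, f W • polU k W) + f Z • polU k Z := by
        conv_lhs => rw [hRsum]
        rw [← Finset.sum_erase_add R _ hW₁R, hfW₁, hpolW₁]
      nth_rewrite 2 [hsplit]
      rw [add_sub_cancel_left, smul_smul, inv_mul_cancel₀ hfZ, one_smul]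

end ESaux

/-- **Proposition `MainFactorization`.** The composite `E ∘ ι : kQ → kℳ⁺` is
surjective: every Pólya orbit sum of an aligned unlabeled forest lies in
`E(ι(kQ))`. -/
theorem E_iota_surjective (k : Type) [Field k] [CharZero k]
    (X : List UTree) (hX : IsUForest X) (hA : ForestAlignedU X) :
    ∃ x : QPath →₀ k, (∀ P ∈ x.support, P.Valid) ∧
      EL k (iotaLinM k x) = polU k X := by
  obtain ⟨x, hsupp, hEL⟩ := ESaux.aux_main k (ESaux.muM ↑X) X le_rfl hX hA
  exact ⟨x, fun P hP => (hsupp P hP).1, hEL⟩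
end
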